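/- arXiv:2210.16026 — 3 statements merged into one kernel-verified Lean document; each statement's English description precedes it below -/
import Mathlib

section
/- The metric space (D, d̂_{J1}) is complete: every Cauchy sequence for d̂_{J1} converges in D. -/
open Set Filter Topology

noncomputable section

/-- The unit interval `[0,1] ⊆ ℝ`, as a type. -/
abbrev unitI : Type := ↥(Set.Icc (0:ℝ) 1)

/-- The point `0` of the unit interval. -/
def i0 : unitI := ⟨0, by norm_num⟩

/-- The point `1` of the unit interval. -/
def i1 : unitI := ⟨1, by norm_num⟩

/-- A function `f : [0,1] → ℝ` is càdlàg if it is right-continuous at every point and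
has a left limit at every point (both conditions being vacuous where the corresponding
one-sided neighbourhood filter is trivial). -/
def Cadlag (f : unitI → ℝ) : Prop :=
  (∀ t : unitI, Tendsto f (𝓝[>] t) (𝓝 (f t))) ∧
  (∀ t : unitI, ∃ L : ℝ, Tendsto f (𝓝[<] t) (𝓝 L))

/-- The Skorokhod space `D` of càdlàg functions `[0,1] → ℝ`. -/
def D : Type := {f : unitI → ℝ // Cadlag f}

/-- A time change: a strictly increasing bijection `λ : [0,1] → [0,1]`. -/
def TimeChange (l : unitI → unitI) : Prop := StrictMono l ∧ Function.Bijective l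

/-- The Skorokhod `J₁` metric
`d_{J1}(f,g) = inf_λ ( sup_t |f(λ t) - g t| + sup_t |λ t - t| )`. -/
def dJ1 (f g : D) : ℝ :=
  sInf {x : ℝ | ∃ l : unitI → unitI, TimeChange l ∧
    x = (⨆ t : unitI, |f.1 (l t) - g.1 t|) + ⨆ t : unitI, |(l t : ℝ) - (t : ℝ)|}


/-- The penalty `‖λ‖∘ = sup_{s ≠ t} |log((λ t - λ s)/(t - s))|`, possibly `+∞`. -/
def normCirc (l : unitI → unitI) : ENNReal :=
  ⨆ s : unitI, ⨆ t : unitI, ⨆ _ : s ≠ t,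
    ENNReal.ofReal |Real.log ((((l t : ℝ) - (l s : ℝ))) / ((t : ℝ) - (s : ℝ)))|

/-- The modified Skorokhod metric
`d̂_{J1}(f,g) = inf_λ ( sup_t |f(λ t) - g t| + ‖λ‖∘ )`. -/
def dJ1hat (f g : D) : ℝ :=
  (⨅ l : unitI → unitI, ⨅ _ : TimeChange l,
    (ENNReal.ofReal (⨆ t : unitI, |f.1 (l t) - g.1 t|) + normCirc l)).toReal

-- ### Auxiliary development

instance : Fact ((0:ℝ) ≤ 1) := ⟨zero_le_one⟩

lemma i0_le (t : unitI) : i0 ≤ t := Subtype.mk_le_mk.2 t.2.1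
lemma le_i1 (t : unitI) : t ≤ i1 := Subtype.mk_le_mk.2 t.2.2

namespace TimeChange

variable {l m : unitI → unitI}

lemma id' : TimeChange (id : unitI → unitI) := ⟨strictMono_id, Function.bijective_id⟩

lemma comp (hl : TimeChange l) (hm : TimeChange m) : TimeChange (l ∘ m) :=
  ⟨hl.1.comp hm.1, hl.2.comp hm.2⟩

lemma map_i0 (hl : TimeChange l) : l i0 = i0 := by
  obtain ⟨s, hs⟩ := hl.2.2 i0
  have h1 : l i0 ≤ l s := hl.1.monotone (i0_le s)
  exact le_antisymm (hs ▸ h1) (i0_le _)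

lemma map_i1 (hl : TimeChange l) : l i1 = i1 := by
  obtain ⟨s, hs⟩ := hl.2.2 i1
  have h1 : l s ≤ l i1 := hl.1.monotone (le_i1 s)
  exact le_antisymm (le_i1 _) (hs ▸ h1)

/-- The order isomorphism associated to a time change. -/
def iso (hl : TimeChange l) : unitI ≃o unitI := StrictMono.orderIsoOfSurjective l hl.1 hl.2.2

lemma iso_apply (hl : TimeChange l) (t : unitI) : hl.iso t = l t := rfl

/-- The inverse of a time change. -/
def inv (hl : TimeChange l) : unitI → unitI := hl.iso.symm

lemma inv_tc (hl : TimeChange l) : TimeChange hl.inv :=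
  ⟨hl.iso.symm.strictMono, hl.iso.symm.bijective⟩

lemma apply_inv (hl : TimeChange l) (t : unitI) : l (hl.inv t) = t := hl.iso.apply_symm_apply t
lemma inv_apply (hl : TimeChange l) (t : unitI) : hl.inv (l t) = t := hl.iso.symm_apply_apply t

lemma map_nhdsGT (hl : TimeChange l) (t : unitI) : Filter.map l (𝓝[>] t) = 𝓝[>] (l t) := by
  have h := hl.iso.toHomeomorph.isEmbedding.map_nhdsWithin_eq (Set.Ioi t) t
  have h2 : hl.iso.toHomeomorph '' Set.Ioi t = Set.Ioi (l t) := hl.iso.image_Ioi t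
  rw [h2] at h; exact h

lemma map_nhdsLT (hl : TimeChange l) (t : unitI) : Filter.map l (𝓝[<] t) = 𝓝[<] (l t) := by
  have h := hl.iso.toHomeomorph.isEmbedding.map_nhdsWithin_eq (Set.Iio t) t
  have h2 : hl.iso.toHomeomorph '' Set.Iio t = Set.Iio (l t) := hl.iso.image_Iio t
  rw [h2] at h; exact h

end TimeChange

lemma Cadlag.comp_tc {f : unitI → ℝ} {l : unitI → unitI} (hf : Cadlag f) (hl : TimeChange l) :
    Cadlag (f ∘ l) := by
  constructor
  · intro t
    have := hf.1 (l t)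
    rw [← hl.map_nhdsGT t] at this
    exact this.comp tendsto_map |>.congr (fun _ => rfl)
  · intro t
    obtain ⟨L, hL⟩ := hf.2 (l t)
    rw [← hl.map_nhdsLT t] at hL
    exact ⟨L, hL.comp tendsto_map |>.congr (fun _ => rfl)⟩

lemma Cadlag.bounded {f : unitI → ℝ} (hf : Cadlag f) : ∃ M : ℝ, ∀ t, |f t| ≤ M := by
  have hloc : ∀ t : unitI, ∃ M : ℝ, ∀ᶠ s in 𝓝 t, |f s| ≤ M := by
    intro t
    obtain ⟨L, hL⟩ := hf.2 t
    set M := max (|L| + 1) (|f t| + 1) with hM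
    have h1 : ∀ᶠ s in 𝓝[<] t, |f s| ≤ M := by
      filter_upwards [hL (Metric.ball_mem_nhds L one_pos)] with s hs
      have h : |f s - L| < 1 := by simpa [Real.dist_eq] using hs
      have := abs_add_le (f s - L) L
      simp only [sub_add_cancel] at this
      exact le_trans (by linarith) (le_max_left _ _)
    have h2 : ∀ᶠ s in 𝓝[>] t, |f s| ≤ M := by
      filter_upwards [hf.1 t (Metric.ball_mem_nhds (f t) one_pos)] with s hs
      have h : |f s - f t| < 1 := by simpa [Real.dist_eq] using hs
      have := abs_add_le (f s - f t) (f t)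
      simp only [sub_add_cancel] at this
      exact le_trans (by linarith) (le_max_right _ _)
    have h3 : ∀ᶠ s in 𝓝[≥] t, |f s| ≤ M := by
      rw [← Set.Ioi_insert, nhdsWithin_insert, eventually_sup, eventually_pure]
      exact ⟨le_trans (by linarith [abs_nonneg (f t)]) (le_max_right _ _), h2⟩
    refine ⟨M, ?_⟩
    rw [← nhdsLT_sup_nhdsGE, eventually_sup]
    exact ⟨h1, h3⟩
  choose M hM using hloc
  have hcov := isCompact_univ (X := unitI)
  obtain ⟨T, hT⟩ := hcov.elim_nhds_subcover (fun t => {s | |f s| ≤ M t}) (fun t _ => hM t)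
  obtain ⟨B, hB⟩ := (T.image M).exists_le
  refine ⟨B, fun t => ?_⟩
  have := hT.2 (Set.mem_univ t)
  simp only [Set.mem_iUnion] at this
  obtain ⟨u, hu, htu⟩ := this
  exact le_trans htu (hB _ (Finset.mem_image_of_mem M hu))

/-- Two-sided ratio bound for a time change. -/
def RatioBnd (l : unitI → unitI) (η : ℝ) : Prop :=
  ∀ s t : unitI, s < t →
    Real.exp (-η) * ((t:ℝ) - (s:ℝ)) ≤ (l t : ℝ) - (l s : ℝ) ∧
    (l t : ℝ) - (l s : ℝ) ≤ Real.exp η * ((t:ℝ) - (s:ℝ))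

lemma RatioBnd.mono {l : unitI → unitI} {η η' : ℝ} (h : RatioBnd l η) (hle : η ≤ η') :
    RatioBnd l η' := by
  intro s t hst
  obtain ⟨h1, h2⟩ := h s t hst
  have hts : (0:ℝ) ≤ (t:ℝ) - s := by
    have := Subtype.coe_lt_coe.2 hst; linarith
  constructor
  · refine le_trans (mul_le_mul_of_nonneg_right ?_ hts) h1
    exact Real.exp_le_exp.2 (by linarith)
  · refine le_trans h2 (mul_le_mul_of_nonneg_right ?_ hts)
    exact Real.exp_le_exp.2 hle

lemma RatioBnd.id : RatioBnd (id : unitI → unitI) 0 := by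
  intro s t _; simp

lemma RatioBnd.strictMono {l : unitI → unitI} {η : ℝ} (h : RatioBnd l η) : StrictMono l := by
  intro s t hst
  have h1 := (h s t hst).1
  have hts : (0:ℝ) < (t:ℝ) - s := by
    have := Subtype.coe_lt_coe.2 hst; linarith
  have : (0:ℝ) < (l t : ℝ) - l s :=
    lt_of_lt_of_le (mul_pos (Real.exp_pos _) hts) h1
  exact Subtype.coe_lt_coe.1 (by linarith)

lemma RatioBnd.comp {l m : unitI → unitI} {a b : ℝ} (hl : RatioBnd l a) (hm : RatioBnd m b) :
    RatioBnd (l ∘ m) (a + b) := by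
  intro s t hst
  have hmst : m s < m t := hm.strictMono hst
  obtain ⟨h1, h2⟩ := hm s t hst
  obtain ⟨h3, h4⟩ := hl (m s) (m t) hmst
  have hts : (0:ℝ) ≤ (t:ℝ) - s := by
    have := Subtype.coe_lt_coe.2 hst; linarith
  have hea := Real.exp_pos (-a); have heb := Real.exp_pos (-b)
  have hea' := Real.exp_pos a; have heb' := Real.exp_pos b
  constructor
  · have : Real.exp (-(a+b)) * ((t:ℝ) - s) = Real.exp (-a) * (Real.exp (-b) * ((t:ℝ) - s)) := by
      rw [← mul_assoc, ← Real.exp_add]; ring_nf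
    rw [this]
    calc Real.exp (-a) * (Real.exp (-b) * ((t:ℝ) - s))
        ≤ Real.exp (-a) * ((m t : ℝ) - m s) := by
          exact mul_le_mul_of_nonneg_left h1 hea.le
      _ ≤ (l (m t) : ℝ) - l (m s) := h3
  · have he : Real.exp (a+b) * ((t:ℝ) - s) = Real.exp a * (Real.exp b * ((t:ℝ) - s)) := by
      rw [← mul_assoc, ← Real.exp_add]
    calc (l (m t) : ℝ) - l (m s) ≤ Real.exp a * ((m t : ℝ) - m s) := h4
      _ ≤ Real.exp a * (Real.exp b * ((t:ℝ) - s)) := mul_le_mul_of_nonneg_left h2 hea'.le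
      _ = Real.exp (a+b) * ((t:ℝ) - s) := he.symm

lemma RatioBnd.dist_le {l : unitI → unitI} {η : ℝ} (h : RatioBnd l η) (s t : unitI) :
    |(l t : ℝ) - l s| ≤ Real.exp η * |(t:ℝ) - s| := by
  rcases lt_trichotomy s t with hst | hst | hst
  · obtain ⟨h1, h2⟩ := h s t hst
    have hts : (0:ℝ) < (t:ℝ) - s := by have := Subtype.coe_lt_coe.2 hst; linarith
    have hpos : (0:ℝ) < (l t : ℝ) - l s :=
      lt_of_lt_of_le (mul_pos (Real.exp_pos _) hts) h1
    rw [abs_of_pos hpos, abs_of_pos hts]; exact h2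
  · subst hst; simp
  · obtain ⟨h1, h2⟩ := h t s hst
    have hts : (0:ℝ) < (s:ℝ) - t := by have := Subtype.coe_lt_coe.2 hst; linarith
    have hpos : (0:ℝ) < (l s : ℝ) - l t :=
      lt_of_lt_of_le (mul_pos (Real.exp_pos _) hts) h1
    rw [abs_sub_comm, abs_of_pos hpos, abs_sub_comm, abs_of_pos hts]; exact h2

lemma RatioBnd.near_id {l : unitI → unitI} {η : ℝ} (h : RatioBnd l η) (h0 : l i0 = i0)
    (hη : 0 ≤ η) (t : unitI) : |(l t : ℝ) - t| ≤ Real.exp η - 1 := by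
  have hprod : Real.exp (-η) * Real.exp η = 1 := by rw [← Real.exp_add]; simp
  have h1le : (1:ℝ) ≤ Real.exp η := Real.one_le_exp hη
  rcases eq_or_lt_of_le (i0_le t) with heq | hlt
  · rw [← heq, h0]; simp; linarith
  · obtain ⟨hb1, hb2⟩ := h i0 t hlt
    have h0' : (l i0 : ℝ) = 0 := by rw [h0]; rfl
    have hi0 : ((i0 : unitI) : ℝ) = 0 := rfl
    rw [h0', hi0, sub_zero, sub_zero] at hb1 hb2
    have ht0 : (0:ℝ) < (t:ℝ) := by
      have := Subtype.coe_lt_coe.2 hlt; simpa [hi0] using this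
    have ht1 : (t:ℝ) ≤ 1 := t.2.2
    have hexp : Real.exp (-η) ≥ 2 - Real.exp η := by nlinarith [Real.exp_pos η]
    rw [abs_le]; constructor
    · nlinarith
    · nlinarith

lemma normCirc_le_of_ratio {l : unitI → unitI} {η : ℝ} (hη : 0 ≤ η) (h : RatioBnd l η) :
    normCirc l ≤ ENNReal.ofReal η := by
  refine iSup_le fun s => iSup_le fun t => iSup_le fun hst => ?_
  rw [ENNReal.ofReal_le_ofReal_iff hη]
  -- reduce to the case s < t by symmetry of the expression
  have key : ∀ s t : unitI, s < t →
      |Real.log (((l t : ℝ) - l s) / ((t:ℝ) - s))| ≤ η := by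
    intro s t hst
    obtain ⟨h1, h2⟩ := h s t hst
    have hts : (0:ℝ) < (t:ℝ) - s := by have := Subtype.coe_lt_coe.2 hst; linarith
    set r : ℝ := ((l t : ℝ) - l s) / ((t:ℝ) - s) with hr
    have hlow : Real.exp (-η) ≤ r := (le_div_iff₀ hts).2 (by linarith)
    have hhigh : r ≤ Real.exp η := (div_le_iff₀ hts).2 (by linarith)
    have hrpos : 0 < r := lt_of_lt_of_le (Real.exp_pos _) hlow
    rw [abs_le]; constructor
    · calc -η = Real.log (Real.exp (-η)) := by rw [Real.log_exp]
        _ ≤ Real.log r := Real.log_le_log (Real.exp_pos _) hlow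
    · calc Real.log r ≤ Real.log (Real.exp η) := Real.log_le_log hrpos hhigh
        _ = η := Real.log_exp η
  rcases lt_or_gt_of_ne hst with hlt | hgt
  · exact key s t hlt
  · have heq : ((l s : ℝ) - l t) / ((s:ℝ) - t) = ((l t : ℝ) - l s) / ((t:ℝ) - s) := by
      rw [← neg_sub (l s : ℝ) (l t : ℝ), ← neg_sub (s:ℝ) (t:ℝ), neg_div_neg_eq]
    have := key t s hgt
    rw [heq] at this
    exact this

lemma ratio_of_normCirc {l : unitI → unitI} {η : ℝ} (hmono : StrictMono l) (hη : 0 ≤ η)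
    (h : normCirc l ≤ ENNReal.ofReal η) : RatioBnd l η := by
  intro s t hst
  have hne : s ≠ t := ne_of_lt hst
  have hterm : ENNReal.ofReal |Real.log (((l t : ℝ) - l s) / ((t:ℝ) - s))| ≤ ENNReal.ofReal η := by
    refine le_trans ?_ h
    refine le_trans ?_ (le_iSup _ s)
    refine le_trans ?_ (le_iSup _ t)
    exact le_iSup (fun _ : s ≠ t => ENNReal.ofReal |Real.log (((l t : ℝ) - l s) / ((t:ℝ) - s))|) hne
  rw [ENNReal.ofReal_le_ofReal_iff hη, abs_le] at hterm
  have hts : (0:ℝ) < (t:ℝ) - s := by have := Subtype.coe_lt_coe.2 hst; linarith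
  have hlt : (0:ℝ) < (l t : ℝ) - l s := by
    have := Subtype.coe_lt_coe.2 (hmono hst); linarith
  set r : ℝ := ((l t : ℝ) - l s) / ((t:ℝ) - s) with hr
  have hrpos : 0 < r := div_pos hlt hts
  have hlow : Real.exp (-η) ≤ r := by
    have := Real.exp_le_exp.2 hterm.1
    rwa [Real.exp_log hrpos] at this
  have hhigh : r ≤ Real.exp η := by
    have := Real.exp_le_exp.2 hterm.2
    rwa [Real.exp_log hrpos] at this
  constructor
  · have := (le_div_iff₀ hts).1 hlow; linarith
  · have := (div_le_iff₀ hts).1 hhigh; linarith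

lemma RatioBnd.inv {l : unitI → unitI} (hl : TimeChange l) {η : ℝ} (h : RatioBnd l η) :
    RatioBnd hl.inv η := by
  intro s t hst
  have hst' : hl.inv s < hl.inv t := (hl.inv_tc).1 hst
  obtain ⟨h1, h2⟩ := h _ _ hst'
  rw [hl.apply_inv, hl.apply_inv] at h1 h2
  have hprod : Real.exp (-η) * Real.exp η = 1 := by rw [← Real.exp_add]; simp
  have hen := Real.exp_pos (-η)
  have hep := Real.exp_pos η
  constructor
  · have h3 := mul_le_mul_of_nonneg_left h2 hen.le
    have heq : Real.exp (-η) * (Real.exp η * ((hl.inv t : ℝ) - hl.inv s)) =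
        (hl.inv t : ℝ) - hl.inv s := by
      rw [← mul_assoc, hprod, one_mul]
    linarith
  · have h3 := mul_le_mul_of_nonneg_left h1 hep.le
    have heq : Real.exp η * (Real.exp (-η) * ((hl.inv t : ℝ) - hl.inv s)) =
        (hl.inv t : ℝ) - hl.inv s := by
      rw [← mul_assoc, mul_comm (Real.exp η), hprod, one_mul]
    linarith

lemma cadlag_of_unif {h : ℕ → unitI → ℝ} {f : unitI → ℝ}
    (hc : ∀ k, Cadlag (h k)) (hu : TendstoUniformly h f atTop) : Cadlag f := by
  constructor
  · intro t
    refine hu.tendsto_of_eventually_tendsto (L := fun k => h k t)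
      (Eventually.of_forall fun k => (hc k).1 t) ?_
    exact hu.tendsto_at t
  · intro t
    by_cases hb : (𝓝[<] t) = ⊥
    · exact ⟨0, by rw [hb]; exact tendsto_bot⟩
    · have : NeBot (𝓝[<] t) := ⟨hb⟩
      choose L hL using fun k => (hc k).2 t
      -- L is Cauchy
      have hcau : CauchySeq L := by
        rw [Metric.cauchySeq_iff]
        intro ε hε
        rw [Metric.tendstoUniformly_iff] at hu
        obtain ⟨N, hN⟩ := (hu (ε/3) (by linarith)).exists_forall_of_atTop
        refine ⟨N, fun j hj k hk => ?_⟩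
        have hjk : ∀ x, dist (h j x) (h k x) < 2 * ε / 3 := by
          intro x
          calc dist (h j x) (h k x) ≤ dist (h j x) (f x) + dist (f x) (h k x) := dist_triangle _ _ _
            _ < ε/3 + ε/3 := by
                have h1 := hN j hj x
                have h2 := hN k hk x
                rw [dist_comm] at h1
                exact add_lt_add h1 h2
            _ = 2 * ε / 3 := by ring
        have hlim : Tendsto (fun x => dist (h j x) (h k x)) (𝓝[<] t) (𝓝 (dist (L j) (L k))) :=
          ((hL j).dist (hL k))
        have : dist (L j) (L k) ≤ 2 * ε / 3 :=
          le_of_tendsto hlim (Eventually.of_forall fun x => (hjk x).le)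
        linarith
      obtain ⟨ℓ, hℓ⟩ := cauchySeq_tendsto_of_complete hcau
      exact ⟨ℓ, hu.tendsto_of_eventually_tendsto (Eventually.of_forall hL) hℓ⟩


lemma normCirc_id : normCirc (id : unitI → unitI) = 0 :=
  le_antisymm (by simpa using normCirc_le_of_ratio le_rfl RatioBnd.id) zero_le

instance : Nonempty unitI := ⟨i0⟩

/-- The `ENNReal`-valued modified Skorokhod distance. -/
def eD (f g : D) : ENNReal :=
  ⨅ l : unitI → unitI, ⨅ _ : TimeChange l,
    (ENNReal.ofReal (⨆ t : unitI, |f.1 (l t) - g.1 t|) + normCirc l)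

lemma dJ1hat_eq_eD (f g : D) : dJ1hat f g = (eD f g).toReal := rfl

lemma bddAbove_absSub (f g : D) (l : unitI → unitI) :
    BddAbove (Set.range fun t : unitI => |f.1 (l t) - g.1 t|) := by
  obtain ⟨M1, h1⟩ := f.2.bounded
  obtain ⟨M2, h2⟩ := g.2.bounded
  refine ⟨M1 + M2, ?_⟩
  rintro x ⟨t, rfl⟩
  calc |f.1 (l t) - g.1 t| ≤ |f.1 (l t)| + |g.1 t| := abs_sub _ _
    _ ≤ M1 + M2 := add_le_add (h1 _) (h2 _)

lemma le_supAbs (f g : D) (l : unitI → unitI) (t : unitI) :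
    |f.1 (l t) - g.1 t| ≤ ⨆ t : unitI, |f.1 (l t) - g.1 t| :=
  le_ciSup (bddAbove_absSub f g l) t

lemma supAbs_le (f g : D) (l : unitI → unitI) {c : ℝ} (h : ∀ t : unitI, |f.1 (l t) - g.1 t| ≤ c) :
    (⨆ t : unitI, |f.1 (l t) - g.1 t|) ≤ c := ciSup_le h

lemma eD_le {f g : D} {l : unitI → unitI} (hl : TimeChange l) :
    eD f g ≤ ENNReal.ofReal (⨆ t : unitI, |f.1 (l t) - g.1 t|) + normCirc l :=
  iInf_le_of_le l (iInf_le _ hl)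

lemma eD_ne_top (f g : D) : eD f g ≠ ⊤ := by
  refine ne_top_of_le_ne_top ?_ (eD_le (f := f) (g := g) TimeChange.id')
  rw [normCirc_id, add_zero]
  exact ENNReal.ofReal_ne_top

lemma eD_lt_of_dJ1hat_lt {f g : D} {ε : ℝ} (h : dJ1hat f g < ε) : eD f g < ENNReal.ofReal ε := by
  rw [dJ1hat_eq_eD] at h
  exact (ENNReal.lt_ofReal_iff_toReal_lt (eD_ne_top f g)).2 h

lemma eD_extract {f g : D} {ε : ℝ} (_hε : 0 < ε) (h : eD f g < ENNReal.ofReal ε) :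
    ∃ l : unitI → unitI, TimeChange l ∧ (∀ t : unitI, |f.1 (l t) - g.1 t| ≤ ε) ∧
      normCirc l ≤ ENNReal.ofReal ε := by
  rw [eD, iInf_lt_iff] at h
  obtain ⟨l, hlt⟩ := h
  rw [iInf_lt_iff] at hlt
  obtain ⟨hl, hlt⟩ := hlt
  refine ⟨l, hl, ?_, ?_⟩
  · intro t
    have h1 : ENNReal.ofReal (⨆ t : unitI, |f.1 (l t) - g.1 t|) < ENNReal.ofReal ε :=
      lt_of_le_of_lt (le_add_right le_rfl) hlt
    have h2 : (⨆ t : unitI, |f.1 (l t) - g.1 t|) < ε := by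
      by_contra hc
      push_neg at hc
      exact absurd h1 (not_lt.2 (ENNReal.ofReal_le_ofReal hc))
    exact le_of_lt (lt_of_le_of_lt (le_supAbs f g l t) h2)
  · exact le_of_lt (lt_of_le_of_lt (le_add_left le_rfl) hlt)

-- ## The iterated backward compositions
/-- Iterated compositions `P k m = invl k ∘ invl (k+1) ∘ ⋯ ∘ invl (k+m-1)` (note the order:
`P k (m+1) = P k m ∘ invl (k+m)`). -/
def Pfun (invl : ℕ → unitI → unitI) (k : ℕ) : ℕ → unitI → unitI
  | 0 => id
  | (m+1) => Pfun invl k m ∘ invl (k+m)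

lemma Pfun_shift (invl : ℕ → unitI → unitI) (k : ℕ) : ∀ m,
    Pfun invl k (m+1) = invl k ∘ Pfun invl (k+1) m := by
  intro m
  induction m with
  | zero => rfl
  | succ m ih =>
    show Pfun invl k (m+1) ∘ invl (k+(m+1)) = _
    rw [ih]
    have : k + (m+1) = (k+1) + m := by omega
    rw [this]
    rfl

section Key

variable {g : ℕ → D} {l : ℕ → unitI → unitI}

/-- The main construction lemma. -/
lemma key (g : ℕ → D) (l : ℕ → unitI → unitI)
    (htc : ∀ k, TimeChange (l k))
    (hsup : ∀ k t, |(g (k+1)).1 (l k t) - (g k).1 t| ≤ (1/2:ℝ)^k)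
    (hratio : ∀ k, RatioBnd (l k) ((1/2:ℝ)^k)) :
    ∃ f : D, ∀ k, ∃ μ : unitI → unitI, TimeChange μ ∧ RatioBnd μ (2*(1/2:ℝ)^k) ∧
      ∀ t, |(g k).1 (μ t) - f.1 t| ≤ 2*(1/2:ℝ)^k := by
  set b : ℕ → ℝ := fun k => (1/2:ℝ)^k with hb
  have hbpos : ∀ k, 0 < b k := fun k => pow_pos (by norm_num) k
  have hble1 : ∀ k, b k ≤ 1 := fun k => pow_le_one₀ (by norm_num) (by norm_num)
  have hbsucc : ∀ k, b (k+1) = b k / 2 := fun k => by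
    simp only [hb, pow_succ]; ring
  have hbadd : ∀ k m, b (k+m) = b k * b m := fun k m => pow_add _ k m
  set invl : ℕ → unitI → unitI := fun k => (htc k).inv with hinvl
  have hinvtc : ∀ k, TimeChange (invl k) := fun k => (htc k).inv_tc
  have hinvratio : ∀ k, RatioBnd (invl k) (b k) := fun k => RatioBnd.inv (htc k) (hratio k)
  -- properties of P
  have hPtc : ∀ k m, TimeChange (Pfun invl k m) := by
    intro k m
    induction m with
    | zero => exact TimeChange.id'
    | succ m ih => exact ih.comp (hinvtc (k+m))
  have hPratio0 : ∀ k m, RatioBnd (Pfun invl k m) (2*b k - 2*b (k+m)) := by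
    intro k m
    induction m with
    | zero => simpa [Pfun] using RatioBnd.id
    | succ m ih =>
      have h1 : RatioBnd (Pfun invl k m ∘ invl (k+m)) ((2*b k - 2*b (k+m)) + b (k+m)) :=
        ih.comp (hinvratio (k+m))
      have h2 : (2*b k - 2*b (k+m)) + b (k+m) = 2*b k - 2*b (k+(m+1)) := by
        have : k + (m+1) = (k+m) + 1 := by omega
        rw [this, hbsucc]; ring
      rw [h2] at h1
      exact h1
  have hPratio : ∀ k m, RatioBnd (Pfun invl k m) (2*b k) := fun k m =>
    (hPratio0 k m).mono (by linarith [hbpos (k+m)])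
  have hPi0 : ∀ k m, Pfun invl k m i0 = i0 := by
    intro k m
    induction m with
    | zero => rfl
    | succ m ih =>
      show Pfun invl k m (invl (k+m) i0) = i0
      rw [(hinvtc (k+m)).map_i0, ih]
  have hPi1 : ∀ k m, Pfun invl k m i1 = i1 := by
    intro k m
    induction m with
    | zero => rfl
    | succ m ih =>
      show Pfun invl k m (invl (k+m) i1) = i1
      rw [(hinvtc (k+m)).map_i1, ih]
  -- Cauchy estimate for P in m
  have hPdist : ∀ k m t, dist ((Pfun invl k m t : ℝ)) ((Pfun invl k (m+1) t : ℝ)) ≤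
      (Real.exp 3 * b k) * (1/2)^m := by
    intro k m t
    have h1 : |(Pfun invl k (m+1) t : ℝ) - Pfun invl k m t| ≤
        Real.exp (2*b k) * |(invl (k+m) t : ℝ) - t| := by
      have := (hPratio k m).dist_le (t := invl (k+m) t) (s := t)
      simpa [Pfun] using this
    have h2 : |(invl (k+m) t : ℝ) - t| ≤ Real.exp (b (k+m)) - 1 :=
      (hinvratio (k+m)).near_id ((hinvtc (k+m)).map_i0) (hbpos _).le t
    have h3 : Real.exp (b (k+m)) - 1 ≤ Real.exp 1 * b (k+m) := by
      have hx1 : b (k+m) ≤ 1 := hble1 _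
      have hx0 : 0 ≤ b (k+m) := (hbpos _).le
      have hmain : Real.exp (b (k+m)) - 1 ≤ b (k+m) * Real.exp (b (k+m)) := by
        have h5 := Real.add_one_le_exp (-(b (k+m)))
        have hprod : Real.exp (-(b (k+m))) * Real.exp (b (k+m)) = 1 := by
          rw [← Real.exp_add]; simp
        nlinarith [Real.exp_pos (b (k+m)), Real.exp_pos (-(b (k+m)))]
      have hle : Real.exp (b (k+m)) ≤ Real.exp 1 := Real.exp_le_exp.2 hx1
      nlinarith
    have h4 : Real.exp (2*b k) ≤ Real.exp 2 := by
      have : 2 * b k ≤ 2 := by linarith [hble1 k]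
      exact Real.exp_le_exp.2 this
    rw [Real.dist_eq, abs_sub_comm]
    calc |(Pfun invl k (m+1) t : ℝ) - Pfun invl k m t|
        ≤ Real.exp (2*b k) * |(invl (k+m) t : ℝ) - t| := h1
      _ ≤ Real.exp 2 * (Real.exp 1 * b (k+m)) := by
          refine mul_le_mul h4 (le_trans h2 h3) (abs_nonneg _) (Real.exp_pos 2).le
      _ = (Real.exp 3 * b k) * (1/2)^m := by
          rw [hbadd]
          have : Real.exp 2 * Real.exp 1 = Real.exp 3 := by
            rw [← Real.exp_add]; norm_num
          rw [← this]
          simp only [hb]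
          ring
  -- convergence of P as m → ∞
  have hPconv : ∀ k t, ∃ x : ℝ, Tendsto (fun m => ((Pfun invl k m t : ℝ))) atTop (𝓝 x) := by
    intro k t
    have hcau : CauchySeq (fun m => ((Pfun invl k m t : ℝ))) := by
      apply cauchySeq_of_le_geometric (1/2) (Real.exp 3 * b k) (by norm_num)
      intro m
      exact hPdist k m t
    exact cauchySeq_tendsto_of_complete hcau
  choose x hx using hPconv
  have hxmem : ∀ k t, x k t ∈ Set.Icc (0:ℝ) 1 := by
    intro k t
    exact isClosed_Icc.mem_of_tendsto (hx k t) (Eventually.of_forall fun m => (Pfun invl k m t).2)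
  set μ : ℕ → unitI → unitI := fun k t => ⟨x k t, hxmem k t⟩ with hμ
  have hxμ : ∀ k t, Tendsto (fun m => ((Pfun invl k m t : ℝ))) atTop (𝓝 ((μ k t : ℝ))) := hx
  -- ratio bound for μ
  have hμratio : ∀ k, RatioBnd (μ k) (2*b k) := by
    intro k s t hst
    have hlim : Tendsto (fun m => ((Pfun invl k m t : ℝ)) - ((Pfun invl k m s : ℝ))) atTop
        (𝓝 (((μ k t : ℝ)) - ((μ k s : ℝ)))) := (hxμ k t).sub (hxμ k s)
    constructor
    · exact ge_of_tendsto hlim (Eventually.of_forall fun m => (hPratio k m s t hst).1)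
    · exact le_of_tendsto hlim (Eventually.of_forall fun m => (hPratio k m s t hst).2)
  -- endpoints
  have hμi0 : ∀ k, μ k i0 = i0 := by
    intro k
    have h1 : Tendsto (fun m => ((Pfun invl k m i0 : ℝ))) atTop (𝓝 (0:ℝ)) := by
      have : (fun m => ((Pfun invl k m i0 : ℝ))) = fun _ => (0:ℝ) := by
        funext m; rw [hPi0 k m]; rfl
      rw [this]; exact tendsto_const_nhds
    have := tendsto_nhds_unique (hxμ k i0) h1
    exact Subtype.ext this
  have hμi1 : ∀ k, μ k i1 = i1 := by
    intro k
    have h1 : Tendsto (fun m => ((Pfun invl k m i1 : ℝ))) atTop (𝓝 (1:ℝ)) := by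
      have : (fun m => ((Pfun invl k m i1 : ℝ))) = fun _ => (1:ℝ) := by
        funext m; rw [hPi1 k m]; rfl
      rw [this]; exact tendsto_const_nhds
    have := tendsto_nhds_unique (hxμ k i1) h1
    exact Subtype.ext this
  -- continuity of μ
  have hμcont : ∀ k, Continuous (μ k) := by
    intro k
    have hlip : ∀ a c : unitI, dist (μ k a) (μ k c) ≤ Real.exp (2*b k) * dist a c := by
      intro a c
      rw [Subtype.dist_eq, Subtype.dist_eq]
      have := (hμratio k).dist_le (s := c) (t := a)
      simpa [Real.dist_eq] using this
    exact (LipschitzWith.of_dist_le_mul (K := Real.toNNReal (Real.exp (2*b k))) (by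
      intro a c
      rw [Real.coe_toNNReal _ (Real.exp_pos _).le]
      exact hlip a c)).continuous
  -- μ is a time change
  have hμtc : ∀ k, TimeChange (μ k) := by
    intro k
    refine ⟨(hμratio k).strictMono, (hμratio k).strictMono.injective, ?_⟩
    intro y
    have hy : y ∈ Set.Icc (μ k i0) (μ k i1) := by
      rw [hμi0, hμi1]
      exact ⟨i0_le y, le_i1 y⟩
    have := intermediate_value_Icc (i0_le i1) (hμcont k).continuousOn hy
    obtain ⟨s, _, hs⟩ := this
    exact ⟨s, hs⟩
  -- the shift relation: l k ∘ μ k = μ (k+1)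
  have hshift : ∀ k t, l k (μ k t) = μ (k+1) t := by
    intro k t
    have h1 : Tendsto (fun m => ((Pfun invl k (m+1) t : ℝ))) atTop (𝓝 ((μ k t : ℝ))) :=
      (hxμ k t).comp (tendsto_add_atTop_nat 1)
    have h2 : Tendsto (fun m => (Pfun invl (k+1) m t)) atTop (𝓝 (μ (k+1) t)) := by
      rw [tendsto_subtype_rng]
      exact hxμ (k+1) t
    have h3 : Tendsto (fun m => ((invl k (Pfun invl (k+1) m t) : ℝ))) atTop
        (𝓝 ((invl k (μ (k+1) t) : ℝ))) := by
      have hcont : Continuous (invl k) := by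
        have hlip : ∀ a c : unitI, dist (invl k a) (invl k c) ≤ Real.exp (b k) * dist a c := by
          intro a c
          rw [Subtype.dist_eq, Subtype.dist_eq]
          have := (hinvratio k).dist_le (s := c) (t := a)
          simpa [Real.dist_eq] using this
        exact (LipschitzWith.of_dist_le_mul (K := Real.toNNReal (Real.exp (b k))) (by
          intro a c
          rw [Real.coe_toNNReal _ (Real.exp_pos _).le]
          exact hlip a c)).continuous
      exact (continuous_subtype_val.tendsto _).comp ((hcont.tendsto _).comp h2)
    have h4 : (fun m => ((Pfun invl k (m+1) t : ℝ))) =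
        fun m => ((invl k (Pfun invl (k+1) m t) : ℝ)) := by
      funext m
      rw [Pfun_shift]
      rfl
    rw [h4] at h1
    have h5 : (μ k t : ℝ) = ((invl k (μ (k+1) t)) : ℝ) := tendsto_nhds_unique h1 h3
    have h6 : μ k t = invl k (μ (k+1) t) := Subtype.ext h5
    rw [h6]
    exact (htc k).apply_inv (μ (k+1) t)
  -- the functions h and their limit
  set h : ℕ → unitI → ℝ := fun k t => (g k).1 (μ k t) with hh
  have hstep : ∀ k t, |h (k+1) t - h k t| ≤ b k := by
    intro k t
    have := hsup k (μ k t)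
    rw [hshift k t] at this
    exact this
  have htel : ∀ k t m, |h (k+m) t - h k t| ≤ 2*b k - 2*b (k+m) := by
    intro k t m
    induction m with
    | zero => simp
    | succ m ih =>
      have h1 : |h (k+(m+1)) t - h (k+m) t| ≤ b (k+m) := by
        have : k + (m+1) = (k+m) + 1 := by omega
        rw [this]
        exact hstep (k+m) t
      have h2 : 2*b k - 2*b (k+(m+1)) = (2*b k - 2*b (k+m)) + b (k+m) := by
        have : k + (m+1) = (k+m) + 1 := by omega
        rw [this, hbsucc]; ring
      calc |h (k+(m+1)) t - h k t| ≤ |h (k+(m+1)) t - h (k+m) t| + |h (k+m) t - h k t| :=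
            abs_sub_le _ _ _
        _ ≤ b (k+m) + (2*b k - 2*b (k+m)) := add_le_add h1 ih
        _ = 2*b k - 2*b (k+(m+1)) := by rw [h2]; ring
  have hconv : ∀ t, ∃ y : ℝ, Tendsto (fun k => h k t) atTop (𝓝 y) := by
    intro t
    have hcau : CauchySeq (fun k => h k t) := by
      apply cauchySeq_of_le_geometric (1/2) 1 (by norm_num)
      intro k
      rw [Real.dist_eq, abs_sub_comm, one_mul]
      exact hstep k t
    exact cauchySeq_tendsto_of_complete hcau
  choose fx hfx using hconv
  have hbound : ∀ k t, |h k t - fx t| ≤ 2*b k := by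
    intro k t
    have hlim : Tendsto (fun m => |h (k+m) t - h k t|) atTop (𝓝 (|fx t - h k t|)) := by
      have h1 : Tendsto (fun m => h (k+m) t) atTop (𝓝 (fx t)) := by
        have := (hfx t).comp (tendsto_add_atTop_nat k)
        have heq : ((fun j => h j t) ∘ fun m => m + k) = fun m => h (k+m) t := by
          funext m; simp [add_comm]
        rwa [heq] at this
      exact ((h1.sub tendsto_const_nhds).abs)
    have := le_of_tendsto hlim (Eventually.of_forall fun m =>
      le_trans (htel k t m) (show 2*b k - 2*b (k+m) ≤ 2*b k by linarith [hbpos (k+m)]))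
    rw [abs_sub_comm] at this
    exact this
  -- f is cadlag
  have hfcad : Cadlag fx := by
    apply cadlag_of_unif (h := h)
    · intro k
      exact (g k).2.comp_tc (hμtc k)
    · rw [Metric.tendstoUniformly_iff]
      intro ε hε
      have hb0 : Tendsto (fun k => 2 * b k) atTop (𝓝 0) := by
        have := tendsto_pow_atTop_nhds_zero_of_lt_one (by norm_num : (0:ℝ) ≤ 1/2) (by norm_num)
        have h2 := this.const_mul (2:ℝ)
        simpa [hb] using h2
      filter_upwards [hb0.eventually (eventually_lt_nhds hε)] with k hk t
      rw [Real.dist_eq, abs_sub_comm]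
      exact lt_of_le_of_lt (hbound k t) hk
  refine ⟨⟨fx, hfcad⟩, fun k => ⟨μ k, hμtc k, hμratio k, fun t => hbound k t⟩⟩

end Key

/-- The metric space `(D, d̂_{J1})` is complete: every Cauchy sequence
for `d̂_{J1}` converges to some element of `D`. -/
theorem dJ1hat_complete
    (F : ℕ → D)
    (hF : ∀ ε : ℝ, 0 < ε → ∃ N, ∀ m n, N ≤ m → N ≤ n → dJ1hat (F m) (F n) < ε) :
    ∃ f : D, Tendsto (fun n => dJ1hat (F n) f) atTop (𝓝 0) := by
  set b : ℕ → ℝ := fun k => (1/2:ℝ)^k with hb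
  have hbpos : ∀ k, 0 < b k := fun k => pow_pos (by norm_num) k
  -- choose the fast Cauchy subsequence indices
  choose N hN using fun k => hF (b k) (hbpos k)
  set n : ℕ → ℕ := fun k => Nat.rec (N 0) (fun k nk => max nk (N (k+1))) k with hn
  have hn0 : n 0 = N 0 := rfl
  have hnsucc : ∀ k, n (k+1) = max (n k) (N (k+1)) := fun k => rfl
  have hnge : ∀ k, N k ≤ n k := by
    intro k
    cases k with
    | zero => exact le_of_eq hn0.symm
    | succ k => rw [hnsucc]; exact le_max_right _ _
  have hnmono : ∀ k, n k ≤ n (k+1) := fun k => by rw [hnsucc]; exact le_max_left _ _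
  -- the subsequence
  set g : ℕ → D := fun k => F (n k) with hg
  have hclose : ∀ k, dJ1hat (g (k+1)) (g k) < b k := by
    intro k
    exact hN k _ _ (le_trans (hnge k) (hnmono k)) (hnge k)
  have hex : ∀ k, ∃ l : unitI → unitI, TimeChange l ∧
      (∀ t : unitI, |(g (k+1)).1 (l t) - (g k).1 t| ≤ b k) ∧
      normCirc l ≤ ENNReal.ofReal (b k) :=
    fun k => eD_extract (hbpos k) (eD_lt_of_dJ1hat_lt (hclose k))
  choose l htc hsup hnorm using hex
  have hratio : ∀ k, RatioBnd (l k) (b k) :=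
    fun k => ratio_of_normCirc (htc k).1 (hbpos k).le (hnorm k)
  -- apply the key construction
  obtain ⟨f, hf⟩ := key g l htc hsup hratio
  choose μ hμtc hμratio hμsup using hf
  refine ⟨f, ?_⟩
  rw [Metric.tendsto_atTop]
  intro ε hε
  -- choose k with 6 * b k < ε
  have hb0 : Tendsto (fun k => 6 * b k) atTop (𝓝 0) := by
    have h1 : Tendsto (fun k => (1/2:ℝ)^k) atTop (𝓝 0) :=
      tendsto_pow_atTop_nhds_zero_of_lt_one (by norm_num) (by norm_num)
    have h2 := h1.const_mul (6:ℝ)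
    simpa [hb] using h2
  obtain ⟨k, hk⟩ := (hb0.eventually (eventually_lt_nhds hε)).exists
  refine ⟨n k, fun j hj => ?_⟩
  -- d(F j, g k) < b k
  have hjk : dJ1hat (F j) (g k) < b k := hN k _ _ (le_trans (hnge k) hj) (hnge k)
  obtain ⟨lj, hljtc, hljsup, hljnorm⟩ := eD_extract (hbpos k) (eD_lt_of_dJ1hat_lt hjk)
  have hljratio : RatioBnd lj (b k) := ratio_of_normCirc hljtc.1 (hbpos k).le hljnorm
  -- compose
  set lam : unitI → unitI := lj ∘ μ k with hlam
  have hlamtc : TimeChange lam := hljtc.comp (hμtc k)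
  have hlamratio : RatioBnd lam (b k + 2 * b k) := hljratio.comp (hμratio k)
  have hlamsup : ∀ t : unitI, |(F j).1 (lam t) - f.1 t| ≤ 3 * b k := by
    intro t
    have h1 : |(F j).1 (lj (μ k t)) - (g k).1 (μ k t)| ≤ b k := hljsup (μ k t)
    have h2 : |(g k).1 (μ k t) - f.1 t| ≤ 2 * b k := hμsup k t
    calc |(F j).1 (lam t) - f.1 t|
        ≤ |(F j).1 (lj (μ k t)) - (g k).1 (μ k t)| + |(g k).1 (μ k t) - f.1 t| := by
          have : (F j).1 (lam t) - f.1 t =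
              ((F j).1 (lj (μ k t)) - (g k).1 (μ k t)) + ((g k).1 (μ k t) - f.1 t) := by
            simp [hlam]
          rw [this]; exact abs_add_le _ _
      _ ≤ b k + 2 * b k := add_le_add h1 h2
      _ = 3 * b k := by ring
  have heD : eD (F j) f ≤ ENNReal.ofReal (6 * b k) := by
    have h1 : eD (F j) f ≤ ENNReal.ofReal (⨆ t : unitI, |(F j).1 (lam t) - f.1 t|) +
        normCirc lam := eD_le hlamtc
    have h2 : ENNReal.ofReal (⨆ t : unitI, |(F j).1 (lam t) - f.1 t|) ≤
        ENNReal.ofReal (3 * b k) :=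
      ENNReal.ofReal_le_ofReal (supAbs_le (F j) f lam hlamsup)
    have h3 : normCirc lam ≤ ENNReal.ofReal (3 * b k) := by
      have := normCirc_le_of_ratio (by linarith [hbpos k] : (0:ℝ) ≤ b k + 2 * b k) hlamratio
      refine le_trans this (ENNReal.ofReal_le_ofReal (by linarith))
    calc eD (F j) f ≤ _ := h1
      _ ≤ ENNReal.ofReal (3 * b k) + ENNReal.ofReal (3 * b k) := add_le_add h2 h3
      _ = ENNReal.ofReal (6 * b k) := by
          rw [← ENNReal.ofReal_add (by linarith [hbpos k]) (by linarith [hbpos k])]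
          ring_nf
  have hfinal : dJ1hat (F j) f ≤ 6 * b k := by
    rw [dJ1hat_eq_eD]
    exact ENNReal.toReal_le_of_le_ofReal (by linarith [hbpos k]) heD
  rw [Real.dist_eq]
  have hnonneg : 0 ≤ dJ1hat (F j) f := by rw [dJ1hat_eq_eD]; exact ENNReal.toReal_nonneg
  rw [sub_zero, abs_of_nonneg hnonneg]
  exact lt_of_le_of_lt hfinal hk
end
end

section
/- The metric space (D, d_{J1}) is separable: there exists a countable subset of D that is dense for the metric d_{J1}. -/
open Set Filter Topology

noncomputable section

/-! ### Auxiliary material for the proof of separability -/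

namespace SkoAux

instance : Nonempty unitI := ⟨i0⟩

/-- clamp a real number into `[0,1]`. -/
def proj (x : ℝ) : unitI :=
  ⟨max 0 (min 1 x), ⟨le_max_left _ _, max_le (by norm_num) (min_le_left _ _)⟩⟩

lemma proj_coe {x : ℝ} (h0 : 0 ≤ x) (h1 : x ≤ 1) : proj x = ⟨x, ⟨h0, h1⟩⟩ := by
  apply Subtype.ext
  show max 0 (min 1 x) = x
  rw [min_eq_right h1, max_eq_right h0]

lemma continuous_proj : Continuous proj :=
  Continuous.subtype_mk (continuous_const.max (continuous_const.min continuous_id)) _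

/-- chain monotonicity -/
lemma chain_le {q : ℕ → ℝ} {N : ℕ} (h : ∀ j, j < N → q j < q (j+1)) :
    ∀ {i j : ℕ}, i ≤ j → j ≤ N → q i ≤ q j := by
  intro i j hij hjN
  induction j with
  | zero => simp [Nat.le_zero.1 hij]
  | succ n ih =>
    rcases Nat.eq_or_lt_of_le hij with h'|h'
    · rw [h']
    · have hn : i ≤ n := Nat.lt_succ_iff.1 h'
      exact le_trans (ih hn (le_trans (Nat.le_succ n) hjN))
        (le_of_lt (h n (Nat.lt_of_succ_le hjN)))

lemma chain_lt {q : ℕ → ℝ} {N : ℕ} (h : ∀ j, j < N → q j < q (j+1)) :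
    ∀ {i j : ℕ}, i < j → j ≤ N → q i < q j := by
  intro i j hij hjN
  obtain ⟨k, rfl⟩ : ∃ k, j = k + 1 := ⟨j - 1, by omega⟩
  exact lt_of_le_of_lt (chain_le h (Nat.lt_succ_iff.1 hij) (by omega))
    (h k (by omega))

/-- largest index `i ≤ N` with `q i ≤ x` (or `0`). -/
def idx (N : ℕ) (q : ℕ → ℝ) (x : ℝ) : ℕ :=
  @Nat.findGreatest (fun i => q i ≤ x) (Classical.decPred _) N

lemma idx_le (N : ℕ) (q : ℕ → ℝ) (x : ℝ) : idx N q x ≤ N :=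
  Nat.findGreatest_le N

lemma idx_spec {N : ℕ} {q : ℕ → ℝ} (hm : ∀ j, j < N → q j < q (j+1))
    {i : ℕ} (hiN : i < N) {x : ℝ} (h1 : q i ≤ x) (h2 : x < q (i+1)) :
    idx N q x = i := by
  unfold idx
  refine le_antisymm ?_ (Nat.le_findGreatest (le_of_lt hiN) h1)
  by_contra hcon
  push_neg at hcon
  have hle : idx N q x ≤ N := idx_le N q x
  have hP : q (@Nat.findGreatest (fun i => q i ≤ x) (Classical.decPred _) N) ≤ x :=
    Nat.findGreatest_spec (P := fun i => q i ≤ x) (le_of_lt hiN) h1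
  have : q (i+1) ≤ q (@Nat.findGreatest (fun i => q i ≤ x) (Classical.decPred _) N) :=
    chain_le hm (by omega) hle
  linarith [lt_of_lt_of_le h2 (le_trans this hP)]

lemma idx_last {N : ℕ} {q : ℕ → ℝ} {x : ℝ} (h1 : q N ≤ x) : idx N q x = N :=
  le_antisymm (idx_le N q x) (Nat.le_findGreatest le_rfl h1)

lemma exists_int {N : ℕ} {q : ℕ → ℝ} (hm : ∀ j, j < N → q j < q (j+1))
    (h0 : q 0 = 0) (hN : q N = 1) {t : ℝ} (ht0 : 0 ≤ t) (ht1 : t < 1) :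
    ∃ i, i < N ∧ q i ≤ t ∧ t < q (i+1) := by
  set i := idx N q t with hi
  have hP : q i ≤ t := Nat.findGreatest_spec (P := fun i => q i ≤ t) (Nat.zero_le N)
    (by show q 0 ≤ t; rw [h0]; exact ht0)
  have hile : i ≤ N := idx_le N q t
  have hiN : i < N := by
    rcases Nat.lt_or_ge i N with h|h
    · exact h
    · exfalso; have : i = N := le_antisymm hile h
      rw [this, hN] at hP; linarith
  refine ⟨i, hiN, hP, ?_⟩
  by_contra hcon
  push_neg at hcon
  have : i + 1 ≤ i := Nat.le_findGreatest (by omega) hcon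
  omega

lemma exists_int' {N : ℕ} {q : ℕ → ℝ} (hm : ∀ j, j < N → q j < q (j+1))
    (h0 : q 0 = 0) (hN : q N = 1) {t : ℝ} (ht0 : 0 < t) (ht1 : t ≤ 1) :
    ∃ i, i < N ∧ q i < t ∧ t ≤ q (i+1) := by
  set i := @Nat.findGreatest (fun i => q i < t) (Classical.decPred _) N with hi
  have hP : q i < t := Nat.findGreatest_spec (P := fun i => q i < t) (Nat.zero_le N)
    (by show q 0 < t; rw [h0]; exact ht0)
  have hile : i ≤ N := Nat.findGreatest_le N
  have hiN : i < N := by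
    rcases Nat.lt_or_ge i N with h|h
    · exact h
    · exfalso; have : i = N := le_antisymm hile h
      rw [this, hN] at hP; linarith
  refine ⟨i, hiN, hP, ?_⟩
  by_contra hcon
  push_neg at hcon
  have : i + 1 ≤ i := Nat.le_findGreatest (by omega) hcon
  omega

/-- step function with nodes `q` and values `r`, as a function on `[0,1]`. -/
def stepF (N : ℕ) (q r : ℕ → ℝ) : unitI → ℝ := fun s => r (idx N q s.1)

/-- right-continuity transfer -/
lemma F_right {f : unitI → ℝ} (hf : Cadlag f) {x : ℝ} (h0 : 0 ≤ x) (h1 : x < 1) :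
    Tendsto (fun y => f (proj y)) (𝓝[>] x) (𝓝 (f (proj x))) := by
  set t : unitI := ⟨x, ⟨h0, le_of_lt h1⟩⟩ with htdef
  have hpx : proj x = t := proj_coe h0 (le_of_lt h1)
  have hmain : Tendsto proj (𝓝[>] x) (𝓝[>] t) := by
    rw [tendsto_nhdsWithin_iff]
    constructor
    · have : Tendsto proj (𝓝[>] x) (𝓝 (proj x)) :=
        (continuous_proj.tendsto x).mono_left nhdsWithin_le_nhds
      rwa [hpx] at this
    · filter_upwards [Ioo_mem_nhdsGT h1] with y hy
      have : proj y = ⟨y, ⟨le_trans h0 (le_of_lt hy.1), le_of_lt hy.2⟩⟩ :=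
        proj_coe (le_trans h0 (le_of_lt hy.1)) (le_of_lt hy.2)
      have hy' : (t : ℝ) < ((proj y : unitI) : ℝ) := by rw [this]; exact hy.1
      exact Set.mem_Ioi.2 (Subtype.coe_lt_coe.1 hy')
  have := (hf.1 t).comp hmain
  rwa [hpx]

lemma F_left {f : unitI → ℝ} (hf : Cadlag f) {x : ℝ} (h0 : 0 < x) (h1 : x ≤ 1) :
    ∃ L : ℝ, Tendsto (fun y => f (proj y)) (𝓝[<] x) (𝓝 L) := by
  set t : unitI := ⟨x, ⟨le_of_lt h0, h1⟩⟩ with htdef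
  have hpx : proj x = t := proj_coe (le_of_lt h0) h1
  obtain ⟨L, hL⟩ := hf.2 t
  refine ⟨L, ?_⟩
  have hmain : Tendsto proj (𝓝[<] x) (𝓝[<] t) := by
    rw [tendsto_nhdsWithin_iff]
    constructor
    · have : Tendsto proj (𝓝[<] x) (𝓝 (proj x)) :=
        (continuous_proj.tendsto x).mono_left nhdsWithin_le_nhds
      rwa [hpx] at this
    · filter_upwards [Ioo_mem_nhdsLT h0] with y hy
      have : proj y = ⟨y, ⟨le_of_lt hy.1, le_trans (le_of_lt hy.2) h1⟩⟩ :=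
        proj_coe (le_of_lt hy.1) (le_trans (le_of_lt hy.2) h1)
      have hy' : ((proj y : unitI) : ℝ) < (t : ℝ) := by rw [this]; exact hy.2
      exact Set.mem_Iio.2 (Subtype.coe_lt_coe.1 hy')
  exact hL.comp hmain

/-- step functions are càdlàg -/
lemma cadlag_stepF {N : ℕ} {q : ℕ → ℝ} (r : ℕ → ℝ)
    (hm : ∀ j, j < N → q j < q (j+1)) (h0 : q 0 = 0) (hN : q N = 1) :
    Cadlag (stepF N q r) := by
  constructor
  · intro t
    by_cases ht : (t:ℝ) < 1
    · obtain ⟨i, hiN, h1, h2⟩ := exists_int hm h0 hN t.2.1 ht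
      have hgt : stepF N q r t = r i := by
        unfold stepF; rw [idx_spec hm hiN h1 h2]
      rw [hgt]
      apply Tendsto.congr' _ tendsto_const_nhds
      have hopen : {s : unitI | (s:ℝ) < q (i+1)} ∈ 𝓝[>] t :=
        nhdsWithin_le_nhds (IsOpen.mem_nhds (isOpen_Iio.preimage continuous_subtype_val) h2)
      filter_upwards [hopen, self_mem_nhdsWithin] with s hs1 hs2
      have hs3 : q i ≤ (s:ℝ) := le_trans h1 (le_of_lt (Subtype.coe_lt_coe.2 hs2))
      show r i = stepF N q r s
      unfold stepF; rw [idx_spec hm hiN hs3 hs1]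
    · have ht1 : (t:ℝ) = 1 := le_antisymm t.2.2 (not_lt.1 ht)
      have hempty : Ioi t = (∅ : Set unitI) := by
        ext s; simp only [mem_Ioi, mem_empty_iff_false, iff_false, not_lt]
        exact Subtype.coe_le_coe.1 (by rw [ht1]; exact s.2.2)
      rw [show (𝓝[>] t) = ⊥ from by rw [hempty, nhdsWithin_empty]]
      exact tendsto_bot
  · intro t
    by_cases ht : 0 < (t:ℝ)
    · obtain ⟨i, hiN, h1, h2⟩ := exists_int' hm h0 hN ht t.2.2
      refine ⟨r i, ?_⟩
      apply Tendsto.congr' _ tendsto_const_nhds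
      have hopen : {s : unitI | q i < (s:ℝ)} ∈ 𝓝[<] t :=
        nhdsWithin_le_nhds (IsOpen.mem_nhds (isOpen_Ioi.preimage continuous_subtype_val) h1)
      filter_upwards [hopen, self_mem_nhdsWithin] with s hs1 hs2
      have hs2' : (s:ℝ) < t := Subtype.coe_lt_coe.2 hs2
      show r i = stepF N q r s
      unfold stepF
      rw [idx_spec hm hiN (le_of_lt hs1) (lt_of_lt_of_le hs2' h2)]
    · have ht0 : (t:ℝ) = 0 := le_antisymm (not_lt.1 ht) t.2.1
      refine ⟨stepF N q r t, ?_⟩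
      have hempty : Iio t = (∅ : Set unitI) := by
        ext s; simp only [mem_Iio, mem_empty_iff_false, iff_false, not_lt]
        exact Subtype.coe_le_coe.1 (by rw [ht0]; exact s.2.1)
      rw [show (𝓝[<] t) = ⊥ from by rw [hempty, nhdsWithin_empty]]
      exact tendsto_bot

/-! ### The piecewise linear time change -/

/-- piecewise linear map sending nodes `q i` to `u i`. -/
def tc (N : ℕ) (q u : ℕ → ℝ) : ℝ → ℝ := fun t =>
  ∑ i ∈ Finset.range N, (u (i+1) - u i) / (q (i+1) - q i) * (min t (q (i+1)) - min t (q i))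

lemma min_sub_min_mono {a b s t : ℝ} (hba : b ≤ a) (hst : s ≤ t) :
    min s a - min s b ≤ min t a - min t b := by
  simp only [min_def]
  split_ifs <;> linarith

lemma tc_monotone {N : ℕ} {q u : ℕ → ℝ} (hq : ∀ j, j < N → q j < q (j+1))
    (hu : ∀ j, j < N → u j < u (j+1)) : Monotone (tc N q u) := by
  intro s t hst
  apply Finset.sum_le_sum
  intro i hi
  have hiN : i < N := Finset.mem_range.1 hi
  have hslope : 0 ≤ (u (i+1) - u i) / (q (i+1) - q i) :=
    div_nonneg (by linarith [hu i hiN]) (by linarith [hq i hiN])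
  exact mul_le_mul_of_nonneg_left (min_sub_min_mono (le_of_lt (hq i hiN)) hst) hslope

lemma tc_formula {N : ℕ} {q u : ℕ → ℝ} (hq : ∀ j, j < N → q j < q (j+1))
    (hu0 : u 0 = 0) {i : ℕ} (hiN : i < N) {t : ℝ} (h1 : q i ≤ t) (h2 : t ≤ q (i+1)) :
    tc N q u t = u i + (u (i+1) - u i) / (q (i+1) - q i) * (t - q i) := by
  unfold tc
  rw [← Finset.sum_range_add_sum_Ico _ (show i+1 ≤ N from hiN)]
  have hzero : ∑ j ∈ Finset.Ico (i+1) N,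
      (u (j+1) - u j) / (q (j+1) - q j) * (min t (q (j+1)) - min t (q j)) = 0 := by
    apply Finset.sum_eq_zero
    intro j hj
    have hj1 : i + 1 ≤ j := (Finset.mem_Ico.1 hj).1
    have hj2 : j < N := (Finset.mem_Ico.1 hj).2
    have m1 : min t (q j) = t := min_eq_left (le_trans h2 (chain_le hq hj1 (le_of_lt hj2)))
    have m2 : min t (q (j+1)) = t := min_eq_left (le_trans h2 (chain_le hq (by omega) hj2))
    rw [m1, m2]; ring
  rw [hzero, add_zero, Finset.sum_range_succ]
  have m1 : min t (q (i+1)) = t := min_eq_left h2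
  have m2 : min t (q i) = q i := min_eq_right h1
  rw [m1, m2]
  have hmain : ∑ j ∈ Finset.range i,
      (u (j+1) - u j) / (q (j+1) - q j) * (min t (q (j+1)) - min t (q j))
      = ∑ j ∈ Finset.range i, (u (j+1) - u j) := by
    apply Finset.sum_congr rfl
    intro j hj
    have hji : j < i := Finset.mem_range.1 hj
    have m3 : min t (q (j+1)) = q (j+1) :=
      min_eq_right (le_trans (chain_le hq (by omega) (by omega)) h1)
    have m4 : min t (q j) = q j :=
      min_eq_right (le_trans (chain_le hq (by omega) (by omega)) h1)
    rw [m3, m4]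
    exact div_mul_cancel₀ _ (by have := hq j (by omega); linarith)
  rw [hmain, Finset.sum_range_sub (fun j => u j), hu0]
  ring

lemma tc_node {N : ℕ} {q u : ℕ → ℝ} (hq : ∀ j, j < N → q j < q (j+1))
    (hu0 : u 0 = 0) (hN : 0 < N) : ∀ i, i ≤ N → tc N q u (q i) = u i := by
  intro i hi
  rcases Nat.lt_or_ge i N with h|h
  · rw [tc_formula hq hu0 h (le_refl _) (le_of_lt (hq i h))]
    ring
  · have hiN : N = i := le_antisymm h hi
    subst hiN
    obtain ⟨M, rfl⟩ : ∃ M, N = M + 1 := ⟨N - 1, by omega⟩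
    rw [tc_formula hq hu0 (show M < M+1 by omega) (le_of_lt (hq M (by omega))) (le_refl _)]
    rw [div_mul_cancel₀ _ (by have := hq M (by omega); linarith)]
    ring

lemma tc_strictOn {N : ℕ} {q u : ℕ → ℝ} (hq : ∀ j, j < N → q j < q (j+1))
    (hu : ∀ j, j < N → u j < u (j+1)) (hq0 : q 0 = 0) (hqN : q N = 1) (hu0 : u 0 = 0)
    {s t : ℝ} (hs0 : 0 ≤ s) (hst : s < t) (ht1 : t ≤ 1) :
    tc N q u s < tc N q u t := by
  obtain ⟨i, hiN, h1, h2⟩ := exists_int hq hq0 hqN hs0 (lt_of_lt_of_le hst ht1)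
  set t' := min t (q (i+1)) with ht'
  have hst' : s < t' := lt_min hst h2
  have ht'le : t' ≤ q (i+1) := min_le_right _ _
  have hqit' : q i ≤ t' := le_trans h1 (le_of_lt hst')
  have hslope : 0 < (u (i+1) - u i) / (q (i+1) - q i) :=
    div_pos (by linarith [hu i hiN]) (by linarith [hq i hiN])
  have hA : tc N q u s < tc N q u t' := by
    rw [tc_formula hq hu0 hiN h1 (le_of_lt h2), tc_formula hq hu0 hiN hqit' ht'le]
    have := mul_lt_mul_of_pos_left (show s - q i < t' - q i by linarith) hslope
    linarith
  exact lt_of_lt_of_le hA (tc_monotone hq hu (min_le_left _ _))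

lemma tc_continuous (N : ℕ) (q u : ℕ → ℝ) : Continuous (tc N q u) := by
  apply continuous_finset_sum
  intro i _
  exact continuous_const.mul ((continuous_id.min continuous_const).sub
    (continuous_id.min continuous_const))

lemma tc_mem {N : ℕ} {q u : ℕ → ℝ} (hq : ∀ j, j < N → q j < q (j+1))
    (hu : ∀ j, j < N → u j < u (j+1)) (hq0 : q 0 = 0) (hqN : q N = 1)
    (hu0 : u 0 = 0) (huN : u N = 1) (hN : 0 < N) :
    ∀ t ∈ Icc (0:ℝ) 1, tc N q u t ∈ Icc (0:ℝ) 1 := by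
  have h0 : tc N q u 0 = 0 := by
    have := tc_node hq hu0 hN 0 (Nat.zero_le N); rwa [hq0, hu0] at this
  have h1 : tc N q u 1 = 1 := by
    have := tc_node hq hu0 hN N (le_refl N); rwa [hqN, huN] at this
  intro t ht
  constructor
  · rw [← h0]; exact tc_monotone hq hu ht.1
  · rw [← h1]; exact tc_monotone hq hu ht.2

lemma tc_dev {N : ℕ} {q u : ℕ → ℝ} (hq : ∀ j, j < N → q j < q (j+1))
    (hu : ∀ j, j < N → u j < u (j+1)) (hq0 : q 0 = 0) (hqN : q N = 1)
    (hu0 : u 0 = 0) (huN : u N = 1) (hN : 0 < N) {δ : ℝ} (hδ : 0 ≤ δ)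
    (hdev : ∀ i, i ≤ N → |u i - q i| ≤ δ) :
    ∀ t ∈ Icc (0:ℝ) 1, |tc N q u t - t| ≤ δ := by
  intro t ht
  rcases lt_or_ge t 1 with ht1|ht1
  · obtain ⟨i, hiN, h1, h2⟩ := exists_int hq hq0 hqN ht.1 ht1
    rw [tc_formula hq hu0 hiN h1 (le_of_lt h2)]
    have hΔ : 0 < q (i+1) - q i := by linarith [hq i hiN]
    have hd1 := abs_le.1 (hdev i (le_of_lt hiN))
    have hd2 := abs_le.1 (hdev (i+1) hiN)
    have hkey : (u i + (u (i+1) - u i) / (q (i+1) - q i) * (t - q i) - t) * (q (i+1) - q i)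
        = (q (i+1) - t) * (u i - q i) + (t - q i) * (u (i+1) - q (i+1)) := by
      field_simp
      ring
    rw [abs_le]
    constructor
    · rw [← mul_le_mul_iff_of_pos_right hΔ]
      rw [hkey]
      nlinarith [hd1.1, hd1.2, hd2.1, hd2.2]
    · rw [← mul_le_mul_iff_of_pos_right hΔ, hkey]
      nlinarith [hd1.1, hd1.2, hd2.1, hd2.2]
  · have ht1' : t = 1 := le_antisymm ht.2 ht1
    subst ht1'
    have h1 : tc N q u 1 = 1 := by
      have := tc_node hq hu0 hN N (le_refl N); rwa [hqN, huN] at this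
    rw [h1]; simpa using hδ

/-! ### Oscillation partitions of càdlàg functions -/

lemma osc_partition {F : ℝ → ℝ}
    (Fr : ∀ x : ℝ, 0 ≤ x → x < 1 → Tendsto F (𝓝[>] x) (𝓝 (F x)))
    (Fl : ∀ x : ℝ, 0 < x → x ≤ 1 → ∃ L : ℝ, Tendsto F (𝓝[<] x) (𝓝 L))
    {ε : ℝ} (hε : 0 < ε) :
    ∃ N : ℕ, ∃ u : ℕ → ℝ, 0 < N ∧ u 0 = 0 ∧ u N = 1 ∧ (∀ i, i < N → u i < u (i+1)) ∧
      (∀ i, i < N → ∀ s, u i ≤ s → s < u (i+1) → |F s - F (u i)| < ε) := by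
  set A : Set ℝ := {t | (t ∈ Icc (0:ℝ) 1) ∧ ∃ N : ℕ, ∃ u : ℕ → ℝ, u 0 = 0 ∧ u N = t ∧
      (∀ i, i < N → u i < u (i+1)) ∧
      (∀ i, i < N → ∀ s, u i ≤ s → s < u (i+1) → |F s - F (u i)| < ε)} with hA
  have h0A : (0:ℝ) ∈ A :=
    ⟨⟨le_refl 0, zero_le_one⟩, 0, (fun _ => 0), rfl, rfl,
      fun i hi => absurd hi (Nat.not_lt_zero i), fun i hi => absurd hi (Nat.not_lt_zero i)⟩
  have hbdd : BddAbove A := ⟨1, fun t ht => ht.1.2⟩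
  have hne : A.Nonempty := ⟨0, h0A⟩
  set τ := sSup A with hτdef
  have hτ0 : 0 ≤ τ := le_csSup hbdd h0A
  have hτ1 : τ ≤ 1 := csSup_le hne fun t ht => ht.1.2
  -- extension helper
  have hext : ∀ a ∈ A, ∀ b : ℝ, a < b → b ≤ 1 →
      (∀ s, a ≤ s → s < b → |F s - F a| < ε) → b ∈ A := by
    rintro a ⟨ha, N, u, h0, hN, hm, ho⟩ b hab hb1 hosc
    refine ⟨⟨le_trans ha.1 (le_of_lt hab), hb1⟩, N+1,
      (fun i => if i ≤ N then u i else b), ?_, ?_, ?_, ?_⟩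
    · show (if (0:ℕ) ≤ N then u 0 else b) = 0
      rw [if_pos (Nat.zero_le N)]; exact h0
    · show (if N+1 ≤ N then u (N+1) else b) = b
      rw [if_neg (by omega)]
    · intro i hi
      show (if i ≤ N then u i else b) < (if i+1 ≤ N then u (i+1) else b)
      rcases Nat.lt_or_ge i N with h|h
      · rw [if_pos (by omega : i ≤ N), if_pos (by omega : i+1 ≤ N)]
        exact hm i h
      · have hiN : i = N := by omega
        subst hiN
        rw [if_pos (le_refl i), if_neg (by omega), hN]
        exact hab
    · intro i hi s hs1 hs2
      show |F s - F (if i ≤ N then u i else b)| < ε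
      change (if i ≤ N then u i else b) ≤ s at hs1
      change s < (if i+1 ≤ N then u (i+1) else b) at hs2
      rcases Nat.lt_or_ge i N with h|h
      · rw [if_pos (by omega : i ≤ N)] at hs1 ⊢
        rw [if_pos (by omega : i+1 ≤ N)] at hs2
        exact ho i h s hs1 hs2
      · have hiN : i = N := by omega
        subst hiN
        rw [if_pos (le_refl i), hN] at hs1 ⊢
        rw [if_neg (by omega)] at hs2
        exact hosc s hs1 hs2
  have hτA : τ ∈ A := by
    rcases eq_or_lt_of_le hτ0 with h|h
    · rw [← h]; exact h0A
    · obtain ⟨Lv, hLv⟩ := Fl τ h hτ1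
      have hev : F ⁻¹' Metric.ball Lv (ε/2) ∈ 𝓝[<] τ :=
        hLv (Metric.ball_mem_nhds Lv (by positivity))
      obtain ⟨l, hlτ, hsub⟩ := mem_nhdsLT_iff_exists_Ioo_subset.1 hev
      obtain ⟨a, haA, hla⟩ := exists_lt_of_lt_csSup hne hlτ
      have haτ : a ≤ τ := le_csSup hbdd haA
      rcases eq_or_lt_of_le haτ with h'|h'
      · rwa [← h']
      · refine hext a haA τ h' hτ1 ?_
        intro s hs1 hs2
        have b1 : |F s - Lv| < ε/2 := by
          have := hsub ⟨lt_of_lt_of_le hla hs1, hs2⟩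
          simpa [Metric.mem_ball, Real.dist_eq] using this
        have b2 : |F a - Lv| < ε/2 := by
          have := hsub ⟨hla, h'⟩
          simpa [Metric.mem_ball, Real.dist_eq] using this
        calc |F s - F a| ≤ |F s - Lv| + |Lv - F a| := abs_sub_le _ _ _
          _ = |F s - Lv| + |F a - Lv| := by rw [abs_sub_comm Lv (F a)]
          _ < ε/2 + ε/2 := by linarith
          _ = ε := by ring
  have hτeq : τ = 1 := by
    by_contra hne1
    have hτlt : τ < 1 := lt_of_le_of_ne hτ1 hne1
    have hev : F ⁻¹' Metric.ball (F τ) ε ∈ 𝓝[>] τ :=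
      (Fr τ hτ0 hτlt) (Metric.ball_mem_nhds (F τ) hε)
    obtain ⟨b, hb, hsub⟩ := mem_nhdsGT_iff_exists_Ioo_subset.1 hev
    set b' := min b 1 with hb'def
    have hτb' : τ < b' := lt_min hb hτlt
    set c := (τ + b')/2 with hcdef
    have hc1 : τ < c := by rw [hcdef]; linarith
    have hc2 : c < b' := by rw [hcdef]; linarith
    have hc3 : c ≤ 1 := le_of_lt (lt_of_lt_of_le hc2 (min_le_right b 1))
    have hcb : c < b := lt_of_lt_of_le hc2 (min_le_left b 1)
    have hcA : c ∈ A := by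
      refine hext τ hτA c hc1 hc3 ?_
      intro s hs1 hs2
      rcases eq_or_lt_of_le hs1 with h'|h'
      · rw [← h']; simpa using hε
      · have := hsub ⟨h', lt_trans hs2 hcb⟩
        simpa [Metric.mem_ball, Real.dist_eq] using this
    have := le_csSup hbdd hcA
    rw [← hτdef] at this
    linarith
  obtain ⟨_, N, u, h0, hN, hm, ho⟩ := hτA
  rw [hτeq] at hN
  have hNpos : 0 < N := by
    rcases Nat.eq_zero_or_pos N with h|h
    · subst h; rw [h0] at hN; norm_num at hN
    · exact h
  exact ⟨N, u, hNpos, h0, hN, hm, ho⟩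

end SkoAux

namespace SkoAux

/-- rational step-function data, encoded as a countable type. -/
def E : (Σ N : ℕ, (Fin (N+1) → ℚ) × (Fin (N+1) → ℚ)) → (unitI → ℝ) :=
  fun d => stepF d.1 (fun i => ((d.2.1 ⟨min i d.1, by omega⟩ : ℚ) : ℝ))
    (fun i => ((d.2.2 ⟨min i d.1, by omega⟩ : ℚ) : ℝ))

end SkoAux

/-- `(D, d_{J1})` is separable: there is a countable subset of `D`
that is dense for the metric `d_{J1}`. -/
theorem dJ1_separable :
    ∃ S : Set D, S.Countable ∧ ∀ f : D, ∀ ε : ℝ, 0 < ε → ∃ g ∈ S, dJ1 f g < ε := by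
  classical
  refine ⟨{g : D | ∃ d, g.1 = SkoAux.E d}, ?_, ?_⟩
  · rw [← Set.countable_coe_iff]
    have hex : ∀ g : ↥{g : D | ∃ d, g.1 = SkoAux.E d}, ∃ d, (g : D).1 = SkoAux.E d :=
      fun g => g.2
    choose φ hφ using hex
    have hinj : Function.Injective φ := by
      intro g g' h
      apply Subtype.ext
      apply Subtype.ext
      rw [hφ g, hφ g', h]
    exact Function.Injective.countable hinj
  · intro f ε hε
    have hε' : 0 < ε/4 := by linarith
    set F : ℝ → ℝ := fun x => f.1 (SkoAux.proj x) with hF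
    obtain ⟨N, u, hN, hu0, huN, hum, huo⟩ := SkoAux.osc_partition
      (fun x h0 h1 => SkoAux.F_right f.2 h0 h1)
      (fun x h0 h1 => SkoAux.F_left f.2 h0 h1) hε'
    -- minimal gap
    have hNne : (Finset.range N).Nonempty := ⟨0, Finset.mem_range.2 hN⟩
    set γ := ((Finset.range N).image (fun i => u (i+1) - u i)).min' (hNne.image _) with hγ
    have hγpos : 0 < γ := by
      obtain ⟨i, hi, hieq⟩ := Finset.mem_image.1
        (Finset.min'_mem ((Finset.range N).image (fun i => u (i+1) - u i)) (hNne.image _))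
      rw [hγ, ← hieq]
      exact sub_pos.2 (hum i (Finset.mem_range.1 hi))
    have hγle : ∀ i, i < N → γ ≤ u (i+1) - u i := fun i hi =>
      Finset.min'_le _ _ (Finset.mem_image.2 ⟨i, Finset.mem_range.2 hi, rfl⟩)
    set δ := min (ε/4) γ / 3 with hδ
    have hδpos : 0 < δ := div_pos (lt_min hε' hγpos) (by norm_num)
    have hδε : δ ≤ ε/4 := by
      have h1 : min (ε/4) γ ≤ ε/4 := min_le_left _ _
      rw [hδ]; linarith
    have hδγ : 2*δ < γ := by
      have h1 : min (ε/4) γ ≤ γ := min_le_right _ _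
      rw [hδ]; linarith [hγpos]
    -- rational nodes
    have hmid : ∀ i : ℕ, ∃ c : ℚ, u i - δ < (c:ℝ) ∧ (c:ℝ) < u i + δ :=
      fun i => exists_rat_btwn (by linarith)
    choose cq hcq1 hcq2 using hmid
    -- rational values
    have hrex : ∀ i : ℕ, ∃ c : ℚ, F (u i) - ε/4 < (c:ℝ) ∧ (c:ℝ) < F (u i) + ε/4 :=
      fun i => exists_rat_btwn (by linarith)
    choose cr hcr1 hcr2 using hrex
    set qr : ℕ → ℚ := fun i => if i = 0 then 0 else if N ≤ i then 1 else cq i with hqrdef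
    set qq : ℕ → ℝ := fun i => ((qr (min i N) : ℚ) : ℝ) with hqqdef
    set rr : ℕ → ℝ := fun i => ((cr (min i N) : ℚ) : ℝ) with hrrdef
    have hqeval : ∀ i, i ≤ N → qq i = ((qr i : ℚ) : ℝ) := by
      intro i hi
      show ((qr (min i N) : ℚ) : ℝ) = ((qr i : ℚ) : ℝ)
      rw [min_eq_left hi]
    have hre : ∀ i, i ≤ N → |rr i - F (u i)| < ε/4 := by
      intro i hi
      have : rr i = ((cr i : ℚ) : ℝ) := by
        show ((cr (min i N) : ℚ) : ℝ) = ((cr i : ℚ) : ℝ)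
        rw [min_eq_left hi]
      rw [this, abs_lt]
      constructor
      · linarith [hcr1 i]
      · linarith [hcr2 i]
    have hdev : ∀ i, i ≤ N → |u i - qq i| ≤ δ := by
      intro i hi
      rw [hqeval i hi]
      by_cases h0 : i = 0
      · subst h0
        have : qr 0 = 0 := by simp [hqrdef]
        rw [this, hu0]
        simpa using le_of_lt hδpos
      · by_cases h1 : N ≤ i
        · have hiN : i = N := le_antisymm hi h1
          subst hiN
          have : qr i = 1 := by simp [hqrdef, h0, h1]
          rw [this, huN]
          simpa using le_of_lt hδpos
        · have : qr i = cq i := by simp [hqrdef, h0, h1]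
          rw [this, abs_le]
          constructor
          · linarith [hcq2 i]
          · linarith [hcq1 i]
    have hq0 : qq 0 = 0 := by
      have := hqeval 0 (Nat.zero_le N)
      rw [this]
      have : qr 0 = 0 := by simp [hqrdef]
      rw [this]; norm_num
    have hqN : qq N = 1 := by
      have := hqeval N le_rfl
      rw [this]
      have hN0 : N ≠ 0 := by omega
      have : qr N = 1 := by simp [hqrdef, hN0]
      rw [this]; norm_num
    have hqm : ∀ i, i < N → qq i < qq (i+1) := by
      intro i hi
      have a1 := abs_le.1 (hdev i (le_of_lt hi))
      have a2 := abs_le.1 (hdev (i+1) hi)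
      have hg := hγle i hi
      linarith [hδγ]
    -- the candidate step function
    have hcad : Cadlag (SkoAux.stepF N qq rr) := SkoAux.cadlag_stepF rr hqm hq0 hqN
    set g : D := ⟨SkoAux.stepF N qq rr, hcad⟩ with hgdef
    have hgS : g ∈ {g : D | ∃ d, g.1 = SkoAux.E d} :=
      ⟨⟨N, fun i => qr i.1, fun i => cr i.1⟩, rfl⟩
    -- the time change
    have hmem' : ∀ t : unitI, SkoAux.tc N qq u t.1 ∈ Icc (0:ℝ) 1 :=
      fun t => SkoAux.tc_mem hqm hum hq0 hqN hu0 huN hN t.1 t.2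
    set l : unitI → unitI := fun t => ⟨SkoAux.tc N qq u t.1, hmem' t⟩ with hldef
    have hsm : StrictMono l := by
      intro s t hst
      have : SkoAux.tc N qq u s.1 < SkoAux.tc N qq u t.1 :=
        SkoAux.tc_strictOn hqm hum hq0 hqN hu0 s.2.1 (Subtype.coe_lt_coe.2 hst) t.2.2
      exact Subtype.mk_lt_mk.2 this
    have htc1 : SkoAux.tc N qq u 1 = 1 := by
      have := SkoAux.tc_node hqm hu0 hN N le_rfl; rwa [hqN, huN] at this
    have htc0 : SkoAux.tc N qq u 0 = 0 := by
      have := SkoAux.tc_node hqm hu0 hN 0 (Nat.zero_le N); rwa [hq0, hu0] at this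
    have hbij : Function.Bijective l := by
      refine ⟨hsm.injective, ?_⟩
      intro y
      have hy : (y:ℝ) ∈ Icc (SkoAux.tc N qq u 0) (SkoAux.tc N qq u 1) := by
        rw [htc0, htc1]; exact y.2
      obtain ⟨x, hx, hfx⟩ := intermediate_value_Icc zero_le_one
        (SkoAux.tc_continuous N qq u).continuousOn hy
      exact ⟨⟨x, hx⟩, Subtype.ext hfx⟩
    -- the sup estimates
    have hb1 : ∀ t : unitI, |f.1 (l t) - g.1 t| ≤ 2*(ε/4) := by
      intro t
      have hflt : f.1 (l t) = F (SkoAux.tc N qq u t.1) := by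
        show f.1 (l t) = f.1 (SkoAux.proj (SkoAux.tc N qq u t.1))
        congr 1
        rw [SkoAux.proj_coe (hmem' t).1 (hmem' t).2]
      rcases lt_or_ge t.1 1 with ht|ht
      · obtain ⟨i, hiN, h1, h2⟩ := SkoAux.exists_int hqm hq0 hqN t.2.1 ht
        have hgt : g.1 t = rr i := by
          show rr (SkoAux.idx N qq t.1) = rr i
          rw [SkoAux.idx_spec hqm hiN h1 h2]
        have hL1 : u i ≤ SkoAux.tc N qq u t.1 := by
          have hnode := SkoAux.tc_node hqm hu0 hN i (le_of_lt hiN)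
          rw [← hnode]
          exact SkoAux.tc_monotone hqm hum h1
        have hq1le : qq (i+1) ≤ 1 := by
          rw [← hqN]
          exact SkoAux.chain_le hqm hiN le_rfl
        have hL2 : SkoAux.tc N qq u t.1 < u (i+1) := by
          have hnode := SkoAux.tc_node hqm hu0 hN (i+1) hiN
          rw [← hnode]
          exact SkoAux.tc_strictOn hqm hum hq0 hqN hu0 t.2.1 h2 hq1le
        have hosc := huo i hiN _ hL1 hL2
        have hrre := hre i (le_of_lt hiN)
        rw [hflt, hgt]
        calc |F (SkoAux.tc N qq u t.1) - rr i|
            ≤ |F (SkoAux.tc N qq u t.1) - F (u i)| + |F (u i) - rr i| := abs_sub_le _ _ _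
          _ = |F (SkoAux.tc N qq u t.1) - F (u i)| + |rr i - F (u i)| := by
              rw [abs_sub_comm (F (u i)) (rr i)]
          _ ≤ 2*(ε/4) := by linarith
      · have ht1 : t.1 = 1 := le_antisymm t.2.2 ht
        have hgt : g.1 t = rr N := by
          show rr (SkoAux.idx N qq t.1) = rr N
          rw [ht1, SkoAux.idx_last (le_of_eq hqN)]
        have htcv : SkoAux.tc N qq u t.1 = 1 := by rw [ht1, htc1]
        rw [hflt, hgt, htcv]
        have hrn := hre N le_rfl
        rw [huN] at hrn
        rw [abs_sub_comm]
        linarith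
    have hb2 : ∀ t : unitI, |(l t : ℝ) - (t : ℝ)| ≤ δ := by
      intro t
      exact SkoAux.tc_dev hqm hum hq0 hqN hu0 huN hN (le_of_lt hδpos) hdev t.1 t.2
    have hsup1 : (⨆ t : unitI, |f.1 (l t) - g.1 t|) ≤ 2*(ε/4) := ciSup_le hb1
    have hsup2 : (⨆ t : unitI, |(l t : ℝ) - (t : ℝ)|) ≤ δ := ciSup_le hb2
    have hbddb : BddBelow {x : ℝ | ∃ l' : unitI → unitI, TimeChange l' ∧
        x = (⨆ t : unitI, |f.1 (l' t) - g.1 t|) + ⨆ t : unitI, |(l' t : ℝ) - (t : ℝ)|} := by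
      refine ⟨0, ?_⟩
      rintro x ⟨l', _, rfl⟩
      exact add_nonneg (Real.iSup_nonneg fun t => abs_nonneg _)
        (Real.iSup_nonneg fun t => abs_nonneg _)
    have hd : dJ1 f g ≤ (⨆ t : unitI, |f.1 (l t) - g.1 t|) +
        ⨆ t : unitI, |(l t : ℝ) - (t : ℝ)| :=
      csInf_le hbddb ⟨l, ⟨hsm, hbij⟩, rfl⟩
    refine ⟨g, hgS, ?_⟩
    have hfin : dJ1 f g ≤ 2*(ε/4) + δ := le_trans hd (add_le_add hsup1 hsup2)
    linarith
end
end

section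
/- For t ∈ (0,1), the projection π_t : D → ℝ, π_t(f) := f(t), is continuous at f ∈ D with respect to the metric d_{J1} if and only if f is continuous at t. The projections π_0 and π_1 are continuous at every f ∈ D with respect to d_{J1}. -/
open Set Filter Topology

noncomputable section

lemma nhds_decomp (t : unitI) : 𝓝 t = 𝓝[<] t ⊔ (pure t ⊔ 𝓝[>] t) := by
  have huniv : (univ : Set unitI) = Iio t ∪ ({t} ∪ Ioi t) := by
    ext x
    simp only [mem_univ, mem_union, mem_Iio, mem_singleton_iff, mem_Ioi, true_iff]
    rcases lt_trichotomy x t with h | h | h <;> tauto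
  conv_lhs => rw [← nhdsWithin_univ, huniv, nhdsWithin_union, nhdsWithin_union,
    nhdsWithin_singleton]

lemma cadlag_bounded {f : unitI → ℝ} (hf : Cadlag f) : ∃ M : ℝ, ∀ s, |f s| ≤ M := by
  choose L hL using hf.2
  set M : unitI → ℝ := fun t => max |f t| |L t| + 1 with hM
  have hU : ∀ t : unitI, {s | |f s| ≤ M t} ∈ 𝓝 t := by
    intro t
    rw [nhds_decomp t, mem_sup, mem_sup]
    refine ⟨?_, ?_, ?_⟩
    · have := (hL t).eventually (Metric.ball_mem_nhds (L t) one_pos)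
      filter_upwards [this] with s hs
      simp only [Metric.mem_ball, Real.dist_eq] at hs
      have : |f s| ≤ |L t| + 1 := by
        calc |f s| = |(f s - L t) + L t| := by ring_nf
        _ ≤ |f s - L t| + |L t| := abs_add_le _ _
        _ ≤ |L t| + 1 := by linarith
      simp only [mem_setOf_eq, hM]
      calc |f s| ≤ |L t| + 1 := this
      _ ≤ max |f t| |L t| + 1 := by gcongr; exact le_max_right _ _
    · simp only [mem_pure, mem_setOf_eq, hM]
      calc |f t| ≤ max |f t| |L t| := le_max_left _ _
      _ ≤ _ := by linarith
    · have := (hf.1 t).eventually (Metric.ball_mem_nhds (f t) one_pos)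
      filter_upwards [this] with s hs
      simp only [Metric.mem_ball, Real.dist_eq] at hs
      simp only [mem_setOf_eq, hM]
      calc |f s| = |(f s - f t) + f t| := by ring_nf
      _ ≤ |f s - f t| + |f t| := abs_add_le _ _
      _ ≤ max |f t| |L t| + 1 := by
          have := le_max_left |f t| |L t|; linarith
  obtain ⟨T, -, hT⟩ := isCompact_univ.elim_nhds_subcover (fun t => {s | |f s| ≤ M t})
    (fun t _ => hU t)
  have h0 : ∀ s : unitI, ∃ x ∈ T, |f s| ≤ M x := by
    intro s
    have := hT (mem_univ s)
    simp only [mem_iUnion, mem_setOf_eq] at this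
    obtain ⟨x, hx, hle⟩ := this
    exact ⟨x, hx, hle⟩
  obtain ⟨x0, hx0, -⟩ := h0 i0
  refine ⟨T.sup' ⟨x0, hx0⟩ M, fun s => ?_⟩
  obtain ⟨x, hx, hle⟩ := h0 s
  exact hle.trans (Finset.le_sup' M hx)

lemma timeChange_fix0 {l : unitI → unitI} (h : TimeChange l) : l i0 = i0 := by
  obtain ⟨x, hx⟩ := h.2.2 i0
  have h1 : l i0 ≤ l x := h.1.monotone (Subtype.coe_le_coe.1 x.2.1)
  rw [hx] at h1
  exact le_antisymm h1 (Subtype.coe_le_coe.1 (l i0).2.1)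

lemma timeChange_fix1 {l : unitI → unitI} (h : TimeChange l) : l i1 = i1 := by
  obtain ⟨x, hx⟩ := h.2.2 i1
  have h1 : l x ≤ l i1 := h.1.monotone (Subtype.coe_le_coe.1 x.2.2)
  rw [hx] at h1
  exact le_antisymm (Subtype.coe_le_coe.1 (l i1).2.2) h1

lemma dJ1_bddBelow (f g : D) : BddBelow {x : ℝ | ∃ l : unitI → unitI, TimeChange l ∧
    x = (⨆ t : unitI, |f.1 (l t) - g.1 t|) + ⨆ t : unitI, |(l t : ℝ) - (t : ℝ)|} := by
  refine ⟨0, ?_⟩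
  rintro x ⟨l, hl, rfl⟩
  exact add_nonneg (Real.iSup_nonneg fun t => abs_nonneg _)
    (Real.iSup_nonneg fun t => abs_nonneg _)

lemma dJ1_nonempty (f g : D) : {x : ℝ | ∃ l : unitI → unitI, TimeChange l ∧
    x = (⨆ t : unitI, |f.1 (l t) - g.1 t|) + ⨆ t : unitI, |(l t : ℝ) - (t : ℝ)|}.Nonempty :=
  ⟨_, id, ⟨strictMono_id, Function.bijective_id⟩, rfl⟩

lemma dJ1_le (f g : D) {l : unitI → unitI} (hl : TimeChange l) :
    dJ1 f g ≤ (⨆ t : unitI, |f.1 (l t) - g.1 t|) + ⨆ t : unitI, |(l t : ℝ) - (t : ℝ)| :=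
  csInf_le (dJ1_bddBelow f g) ⟨l, hl, rfl⟩

lemma dJ1_lt {f g : D} {δ : ℝ} (h : dJ1 f g < δ) :
    ∃ l : unitI → unitI, TimeChange l ∧ (∀ s, |f.1 (l s) - g.1 s| < δ) ∧
      (∀ s, |(l s : ℝ) - (s : ℝ)| < δ) := by
  rw [dJ1, csInf_lt_iff (dJ1_bddBelow f g) (dJ1_nonempty f g)] at h
  obtain ⟨x, ⟨l, hl, rfl⟩, hx⟩ := h
  obtain ⟨Mf, hMf⟩ := cadlag_bounded f.2
  obtain ⟨Mg, hMg⟩ := cadlag_bounded g.2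
  have hA : BddAbove (range fun s : unitI => |f.1 (l s) - g.1 s|) := by
    refine ⟨Mf + Mg, ?_⟩
    rintro _ ⟨s, rfl⟩
    calc |f.1 (l s) - g.1 s| ≤ |f.1 (l s)| + |g.1 s| := abs_sub _ _
    _ ≤ Mf + Mg := add_le_add (hMf _) (hMg _)
  have hB : BddAbove (range fun s : unitI => |(l s : ℝ) - (s : ℝ)|) := by
    refine ⟨2, ?_⟩
    rintro _ ⟨s, rfl⟩
    have h1 : |(l s : ℝ)| ≤ 1 := by
      rw [abs_of_nonneg (l s).2.1]; exact (l s).2.2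
    have h2 : |(s : ℝ)| ≤ 1 := by
      rw [abs_of_nonneg s.2.1]; exact s.2.2
    calc |(l s : ℝ) - (s : ℝ)| ≤ |(l s : ℝ)| + |(s : ℝ)| := abs_sub _ _
    _ ≤ 2 := by linarith
  have hA0 : (0:ℝ) ≤ ⨆ t : unitI, |f.1 (l t) - g.1 t| :=
    Real.iSup_nonneg fun t => abs_nonneg _
  have hB0 : (0:ℝ) ≤ ⨆ t : unitI, |(l t : ℝ) - (t : ℝ)| :=
    Real.iSup_nonneg fun t => abs_nonneg _
  refine ⟨l, hl, fun s => ?_, fun s => ?_⟩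
  · calc |f.1 (l s) - g.1 s| ≤ ⨆ t : unitI, |f.1 (l t) - g.1 t| := le_ciSup hA s
    _ < δ := by linarith
  · calc |(l s : ℝ) - (s : ℝ)| ≤ ⨆ t : unitI, |(l t : ℝ) - (t : ℝ)| := le_ciSup hB s
    _ < δ := by linarith

/-- The piecewise linear map sending `[0,t]` to `[0,t']` and `[t,1]` to `[t',1]`. -/
def pl (t t' s : ℝ) : ℝ := if s ≤ t then s * (t' / t) else t' + (s - t) * ((1 - t') / (1 - t))

variable {t t' : ℝ}

lemma pl_mem (h0 : 0 < t') (h1 : t' < t) (h2 : t < 1) {s : ℝ} (hs : s ∈ Icc (0:ℝ) 1) : pl t t' s ∈ Icc (0:ℝ) 1 := by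
  have ht : 0 < t := h0.trans h1
  have ht1 : 0 < 1 - t := by linarith
  unfold pl
  split_ifs with h
  · constructor
    · exact mul_nonneg hs.1 (div_nonneg h0.le ht.le)
    · have e : t * (t' / t) = t' := by field_simp
      have : s * (t' / t) ≤ t * (t' / t) :=
        mul_le_mul_of_nonneg_right h (div_nonneg h0.le ht.le)
      rw [e] at this; linarith
  · push_neg at h
    have hq : 0 ≤ (1 - t') / (1 - t) := div_nonneg (by linarith) ht1.le
    constructor
    · have : 0 ≤ (s - t) * ((1 - t') / (1 - t)) := mul_nonneg (by linarith) hq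
      linarith
    · have e : (1 - t) * ((1 - t') / (1 - t)) = 1 - t' := by field_simp
      have : (s - t) * ((1 - t') / (1 - t)) ≤ (1 - t) * ((1 - t') / (1 - t)) :=
        mul_le_mul_of_nonneg_right (by linarith [hs.2]) hq
      rw [e] at this; linarith

lemma pl_strictMonoOn (h0 : 0 < t') (h1 : t' < t) (h2 : t < 1) {s1 s2 : ℝ} (hs1 : s1 ∈ Icc (0:ℝ) 1) (h12 : s1 < s2) :
    pl t t' s1 < pl t t' s2 := by
  have ht : 0 < t := h0.trans h1
  have ht1 : 0 < 1 - t := by linarith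
  have hq : 0 < (1 - t') / (1 - t) := div_pos (by linarith) ht1
  have hq' : 0 < t' / t := div_pos h0 ht
  unfold pl
  split_ifs with ha hb hb
  · exact mul_lt_mul_of_pos_right h12 hq'
  · push_neg at hb
    have e : t * (t' / t) = t' := by field_simp
    have h3 : s1 * (t' / t) ≤ t * (t' / t) :=
      mul_le_mul_of_nonneg_right ha hq'.le
    rw [e] at h3
    have h4 : 0 < (s2 - t) * ((1 - t') / (1 - t)) := mul_pos (by linarith) hq
    linarith
  · push_neg at ha; linarith
  · push_neg at ha hb
    have : (s1 - t) * ((1 - t') / (1 - t)) < (s2 - t) * ((1 - t') / (1 - t)) :=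
      mul_lt_mul_of_pos_right (by linarith) hq
    linarith

lemma pl_continuous (h0 : 0 < t') (h1 : t' < t) : Continuous (pl t t') := by
  have ht : (0:ℝ) < t := h0.trans h1
  apply Continuous.if_le
  · exact (continuous_id.mul continuous_const)
  · exact continuous_const.add ((continuous_id.sub continuous_const).mul continuous_const)
  · exact continuous_id
  · exact continuous_const
  · intro x hx
    subst hx
    field_simp
    ring

lemma pl_zero (h0 : 0 < t') (h1 : t' < t) : pl t t' 0 = 0 := by
  have ht : (0:ℝ) < t := h0.trans h1
  simp [pl, ht.le]

lemma pl_one (h0 : 0 < t') (h1 : t' < t) (h2 : t < 1) : pl t t' 1 = 1 := by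
  have ht1 : 0 < 1 - t := by linarith
  have h : ¬ (1:ℝ) ≤ t := by linarith
  rw [pl, if_neg h]
  field_simp
  ring

lemma pl_at_t (h0 : 0 < t') (h1 : t' < t) : pl t t' t = t' := by
  have ht : (0:ℝ) < t := h0.trans h1
  rw [pl, if_pos le_rfl]; field_simp

lemma pl_dist (h0 : 0 < t') (h1 : t' < t) (h2 : t < 1) {s : ℝ} (hs : s ∈ Icc (0:ℝ) 1) : |pl t t' s - s| ≤ t - t' := by
  have ht : 0 < t := h0.trans h1
  have ht1 : 0 < 1 - t := by linarith
  unfold pl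
  split_ifs with h
  · have e : s * (t' / t) - s = -(s * (t - t') / t) := by field_simp; ring
    rw [e, abs_neg, abs_of_nonneg (div_nonneg (mul_nonneg hs.1 (by linarith)) ht.le)]
    rw [div_le_iff₀ ht]
    nlinarith
  · push_neg at h
    have e : t' + (s - t) * ((1 - t') / (1 - t)) - s = -((t - t') * (1 - s) / (1 - t)) := by
      field_simp; ring
    rw [e, abs_neg, abs_of_nonneg
      (div_nonneg (mul_nonneg (by linarith) (by linarith [hs.2])) ht1.le)]
    rw [div_le_iff₀ ht1]
    nlinarith [hs.2]

/-- The time change on the unit interval. -/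
def mu (h0 : 0 < t') (h1 : t' < t) (h2 : t < 1) : unitI → unitI :=
  fun s => ⟨pl t t' s, pl_mem h0 h1 h2 s.2⟩

lemma mu_timeChange (h0 : 0 < t') (h1 : t' < t) (h2 : t < 1) : TimeChange (mu h0 h1 h2) := by
  constructor
  · intro s1 s2 h12
    exact Subtype.coe_lt_coe.1 (pl_strictMonoOn h0 h1 h2 s1.2 (Subtype.coe_lt_coe.2 h12))
  · constructor
    · intro s1 s2 h
      by_contra hne
      rcases lt_or_gt_of_ne (fun he : s1 = s2 => hne he) with hlt | hlt
      · exact absurd (congrArg Subtype.val h)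
          (ne_of_lt (pl_strictMonoOn h0 h1 h2 s1.2 (Subtype.coe_lt_coe.2 hlt)))
      · exact absurd (congrArg Subtype.val h).symm
          (ne_of_lt (pl_strictMonoOn h0 h1 h2 s2.2 (Subtype.coe_lt_coe.2 hlt)))
    · intro y
      have hy : (y : ℝ) ∈ Icc (pl t t' 0) (pl t t' 1) := by
        rw [pl_zero h0 h1, pl_one h0 h1 h2]; exact y.2
      obtain ⟨x, hx, hmx⟩ := intermediate_value_Icc (by norm_num : (0:ℝ) ≤ 1)
        (pl_continuous h0 h1).continuousOn hy
      exact ⟨⟨x, hx⟩, Subtype.ext hmx⟩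

lemma mu_continuous (h0 : 0 < t') (h1 : t' < t) (h2 : t < 1) : Continuous (mu h0 h1 h2) :=
  Continuous.subtype_mk ((pl_continuous h0 h1).comp continuous_subtype_val) _

lemma cadlag_comp {f : unitI → ℝ} (hf : Cadlag f) {μ : unitI → unitI}
    (hm : StrictMono μ) (hc : Continuous μ) : Cadlag (f ∘ μ) := by
  constructor
  · intro s
    exact (hf.1 (μ s)).comp
      (hc.continuousAt.continuousWithinAt.tendsto_nhdsWithin fun x hx => hm hx)
  · intro s
    obtain ⟨L, hL⟩ := hf.2 (μ s)
    exact ⟨L, hL.comp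
      (hc.continuousAt.continuousWithinAt.tendsto_nhdsWithin fun x hx => hm hx)⟩

lemma continuousAt_of_leftLim {f : unitI → ℝ} (hf : Cadlag f) {t : unitI} {L : ℝ}
    (hL : Tendsto f (𝓝[<] t) (𝓝 L)) (h : L = f t) : ContinuousAt f t := by
  rw [ContinuousAt, nhds_decomp t, tendsto_sup]
  exact ⟨h ▸ hL, tendsto_sup.2 ⟨tendsto_pure_nhds f t, hf.1 t⟩⟩

/-- For `t ∈ (0,1)` the projection `π_t : D → ℝ`, `π_t(f) = f(t)`, is
continuous at `f` with respect to `d_{J1}` iff `f` is continuous at `t`; the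
projections `π_0` and `π_1` are continuous at every `f ∈ D`. -/
theorem projection_continuousAt_iff :
    (∀ t : unitI, 0 < (t : ℝ) → (t : ℝ) < 1 → ∀ f : D,
      ((∀ ε : ℝ, 0 < ε → ∃ δ : ℝ, 0 < δ ∧
          ∀ g : D, dJ1 f g < δ → |g.1 t - f.1 t| < ε) ↔
        ContinuousAt f.1 t)) ∧
    (∀ f : D, ∀ ε : ℝ, 0 < ε → ∃ δ : ℝ, 0 < δ ∧
      ∀ g : D, dJ1 f g < δ → |g.1 i0 - f.1 i0| < ε) ∧
    (∀ f : D, ∀ ε : ℝ, 0 < ε → ∃ δ : ℝ, 0 < δ ∧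
      ∀ g : D, dJ1 f g < δ → |g.1 i1 - f.1 i1| < ε) := by
  refine ⟨?_, ?_, ?_⟩
  · intro t ht0 ht1 f
    constructor
    · -- ε-δ continuity of the projection implies continuity of f at t
      intro hεδ
      by_contra hc
      obtain ⟨L, hL⟩ := f.2.2 t
      have hne : L ≠ f.1 t := fun h => hc (continuousAt_of_leftLim f.2 hL h)
      have hε0pos : 0 < |f.1 t - L| / 2 := by
        have h1 : f.1 t - L ≠ 0 := sub_ne_zero.2 (Ne.symm hne)
        have := abs_pos.2 h1
        linarith
      set ε0 : ℝ := |f.1 t - L| / 2 with hε0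
      obtain ⟨δ, hδpos, hδ⟩ := hεδ ε0 hε0pos
      set ar : ℝ := max ((t:ℝ)/2) ((t:ℝ) - δ/2) with har
      have har1 : ar < (t:ℝ) := max_lt (by linarith) (by linarith)
      have har0 : 0 ≤ ar := le_trans (by linarith) (le_max_left _ _)
      set a : unitI := ⟨ar, ⟨har0, by linarith [t.2.2]⟩⟩ with ha
      have halt : a < t := Subtype.coe_lt_coe.1 har1
      haveI : (𝓝[<] t).NeBot := nhdsWithin_Iio_self_neBot' ⟨a, halt⟩
      have hS : {s : unitI | |f.1 s - L| < ε0} ∈ 𝓝[<] t := by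
        have := hL.eventually (Metric.ball_mem_nhds L hε0pos)
        filter_upwards [this] with s hs
        simpa [Real.dist_eq] using hs
      have hIoo : Ioo a t ∈ 𝓝[<] t := Ioo_mem_nhdsLT_of_mem ⟨halt, le_rfl⟩
      obtain ⟨t', ht'⟩ := Filter.nonempty_of_mem (inter_mem hS hIoo)
      have hft' : |f.1 t' - L| < ε0 := ht'.1
      have hat' : ar < (t' : ℝ) := Subtype.coe_lt_coe.2 ht'.2.1
      have h0' : 0 < (t':ℝ) := by
        have : (t:ℝ)/2 ≤ ar := le_max_left _ _
        linarith
      have h1' : (t':ℝ) < (t:ℝ) := Subtype.coe_lt_coe.2 ht'.2.2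
      set μ : unitI → unitI := mu h0' h1' ht1 with hμ
      have hμtc : TimeChange μ := mu_timeChange h0' h1' ht1
      set g : D := ⟨f.1 ∘ μ, cadlag_comp f.2 hμtc.1 (mu_continuous h0' h1' ht1)⟩ with hg
      have hsup1 : (⨆ s : unitI, |f.1 (μ s) - g.1 s|) = 0 := by
        have h : ∀ s : unitI, |f.1 (μ s) - g.1 s| = 0 := fun s => by
          simp [hg, Function.comp]
        simp only [h]
        exact ciSup_const
      have hsup2 : (⨆ s : unitI, |(μ s : ℝ) - (s:ℝ)|) ≤ (t:ℝ) - (t':ℝ) :=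
        ciSup_le fun s => pl_dist h0' h1' ht1 s.2
      have hdj : dJ1 f g < δ := by
        have hle := dJ1_le f g hμtc
        rw [hsup1, zero_add] at hle
        have h3 : (t:ℝ) - δ/2 ≤ ar := le_max_right _ _
        have : (t:ℝ) - (t':ℝ) < δ/2 := by linarith
        linarith [hsup2]
      have hgt := hδ g hdj
      have hμt : μ t = t' := Subtype.ext (pl_at_t h0' h1')
      have hgval : g.1 t = f.1 t' := by
        show (f.1 ∘ μ) t = f.1 t'
        rw [Function.comp_apply, hμt]
      rw [hgval] at hgt
      have htri : |f.1 t - L| ≤ |f.1 t - f.1 t'| + |f.1 t' - L| := abs_sub_le _ _ _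
      rw [abs_sub_comm (f.1 t) (f.1 t')] at htri
      linarith
    · -- continuity of f at t implies ε-δ continuity of the projection
      intro hcont ε hε
      rw [Metric.continuousAt_iff] at hcont
      obtain ⟨δ1, hδ1, hc⟩ := hcont (ε/2) (by linarith)
      refine ⟨min δ1 (ε/2), by positivity, fun g hg => ?_⟩
      obtain ⟨l, hl, hA, hB⟩ := dJ1_lt hg
      have h1 := hA t
      have h2 := hB t
      have hd : dist (l t) t < δ1 := by
        rw [Subtype.dist_eq, Real.dist_eq]
        exact lt_of_lt_of_le h2 (min_le_left _ _)
      have h3 := hc hd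
      rw [Real.dist_eq] at h3
      have h1' : |g.1 t - f.1 (l t)| < ε/2 := by
        rw [abs_sub_comm]
        exact lt_of_lt_of_le h1 (min_le_right _ _)
      calc |g.1 t - f.1 t| ≤ |g.1 t - f.1 (l t)| + |f.1 (l t) - f.1 t| := abs_sub_le _ _ _
      _ < ε := by linarith
  · intro f ε hε
    refine ⟨ε, hε, fun g hg => ?_⟩
    obtain ⟨l, hl, h1, -⟩ := dJ1_lt hg
    have := h1 i0
    rw [timeChange_fix0 hl] at this
    rwa [abs_sub_comm] at this
  · intro f ε hε
    refine ⟨ε, hε, fun g hg => ?_⟩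
    obtain ⟨l, hl, h1, -⟩ := dJ1_lt hg
    have := h1 i1
    rw [timeChange_fix1 hl] at this
    rwa [abs_sub_comm] at this
end
end
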